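/- The map sending a pointed Lyndon forest F on [n] to the saturated chain c(F) is a bijection between FLyn_n^• and the set of ascent-free saturated chains of Π_n^• starting at 0̂, where ascent-free is with respect to the labeling λ_• with label poset Λ_n^•. -/

import Mathlib

open Finset

open scoped BigOperators Classical

/-! ## Generic machinery for edge labelings of posets presented by cover relations -/

section Chains

variable {α : Type*} {L : Type*}

/-- The word of labels read along a list of poset elements. -/
def wordOf (lab : α → α → L) : List α → List L
  | x :: y :: rest => lab x y :: wordOf lab (y :: rest)
  | _ => []

/-- `c` is a saturated chain from `x` to `y` with respect to the cover relation `cov`;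
in a graded poset these are exactly the maximal chains of the interval `[x, y]`. -/
def IsSatChain (cov : α → α → Prop) (x y : α) (c : List α) : Prop :=
  c.Chain' cov ∧ c.head? = some x ∧ c.getLast? = some y

/-- A word of labels is increasing if consecutive labels strictly increase. -/
def IncWord (lt : L → L → Prop) (w : List L) : Prop := w.Chain' lt

/-- A word of labels is ascent-free if no consecutive pair of labels strictly increases. -/
def AscFree (lt : L → L → Prop) (w : List L) : Prop := w.Chain' fun a b => ¬ lt a b

/-- The partial order generated by a cover relation. -/
def leOf (cov : α → α → Prop) : α → α → Prop := Relation.ReflTransGen cov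

/-- The strict order generated by a cover relation. -/
def ltOf (cov : α → α → Prop) (a b : α) : Prop := leOf cov a b ∧ a ≠ b

/-- An ER-labeling: every closed interval has a unique increasing maximal chain. -/
def IsERLabeling (cov : α → α → Prop) (lab : α → α → L) (lt : L → L → Prop) : Prop :=
  ∀ x y, leOf cov x y → ∃! c, IsSatChain cov x y c ∧ IncWord lt (wordOf lab c)

/-- The rank two switching property: in every rank-two interval whose increasing chain
has word of labels `ab`, there is a unique chain with word of labels `ba`. -/
def RankTwoSwitch (cov : α → α → Prop) (lab : α → α → L) (lt : L → L → Prop) : Prop :=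
  ∀ x y c a b, IsSatChain cov x y c → IncWord lt (wordOf lab c) → wordOf lab c = [a, b] →
    ∃! c', IsSatChain cov x y c' ∧ wordOf lab c' = [b, a]

/-- In every interval, distinct ascent-free maximal chains have distinct label words. -/
def AscFreeInj (cov : α → α → Prop) (lab : α → α → L) (lt : L → L → Prop) : Prop :=
  ∀ x y c c', IsSatChain cov x y c → IsSatChain cov x y c' →
    AscFree lt (wordOf lab c) → AscFree lt (wordOf lab c') →
    wordOf lab c = wordOf lab c' → c = c'

/-- An EW-labeling. -/
def IsEWLabeling (cov : α → α → Prop) (lab : α → α → L) (lt : L → L → Prop) : Prop :=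
  IsERLabeling cov lab lt ∧ RankTwoSwitch cov lab lt ∧ AscFreeInj cov lab lt

/-- An EL-labeling: every closed interval has a unique increasing maximal chain,
which lexicographically precedes every other maximal chain of the interval. -/
def IsELLabeling (cov : α → α → Prop) (lab : α → α → L) (lt : L → L → Prop) : Prop :=
  ∀ x y, leOf cov x y →
    ∃ c, (IsSatChain cov x y c ∧ IncWord lt (wordOf lab c)) ∧
      ∀ c', IsSatChain cov x y c' → c' ≠ c →
        ¬ IncWord lt (wordOf lab c') ∧ List.Lex lt (wordOf lab c) (wordOf lab c')

end Chains

/-! ## Möbius functions and Whitney numbers -/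

section Whitney

variable {α : Type*} {β : Type*}

/-- Auxiliary Möbius function computed with fuel; for an element of rank `k` of a
graded poset, fuel `k` computes the one-variable Möbius function `μ(0̂, ·)`. -/
noncomputable def muAux (ltr : α → α → Prop) (bot : α) : ℕ → α → ℤ
  | 0, x => if x = bot then 1 else 0
  | k + 1, x => if x = bot then 1 else - ∑ᶠ (y : α) (_ : ltr y x), muAux ltr bot k y

/-- The one-variable Möbius function `μ(0̂, x)` of a graded poset presented by its
cover relation `cov`, minimum `bot` and rank function `rk`. -/
noncomputable def muBot (cov : α → α → Prop) (bot : α) (rk : α → ℕ) (x : α) : ℤ :=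
  muAux (ltOf cov) bot (rk x) x

/-- The `k`-th Whitney number of the first kind. -/
noncomputable def whitney1 (cov : α → α → Prop) (bot : α) (rk : α → ℕ) (k : ℕ) : ℤ :=
  ∑ᶠ (x : α) (_ : rk x = k), muBot cov bot rk x

/-- The `k`-th Whitney number of the second kind. -/
noncomputable def whitney2 (rk : α → ℕ) (k : ℕ) : ℕ :=
  Nat.card {x : α // rk x = k}

/-- Two graded posets are Whitney duals if their Whitney numbers of the first and second
kind are swapped (up to sign). -/
def IsWhitneyDual (covP : α → α → Prop) (botP : α) (rkP : α → ℕ)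
    (covQ : β → β → Prop) (botQ : β) (rkQ : β → ℕ) : Prop :=
  ∀ k, (whitney1 covP botP rkP k).natAbs = whitney2 rkQ k ∧
       (whitney1 covQ botQ rkQ k).natAbs = whitney2 rkP k

/-- Two graded posets are Whitney twins if they have the same Whitney numbers of the first
and of the second kind. -/
def IsWhitneyTwin (covP : α → α → Prop) (botP : α) (rkP : α → ℕ)
    (covQ : β → β → Prop) (botQ : β) (rkQ : β → ℕ) : Prop :=
  ∀ k, whitney1 covP botP rkP k = whitney1 covQ botQ rkQ k ∧ whitney2 rkP k = whitney2 rkQ k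

/-- `(cov, bot, rk)` presents a graded poset with minimum `bot`. -/
def IsGradedPoset (cov : α → α → Prop) (bot : α) (rk : α → ℕ) : Prop :=
  (∀ x, leOf cov bot x) ∧ rk bot = 0 ∧ ∀ x y, cov x y → rk y = rk x + 1

/-- A graded poset has a Whitney dual. -/
def HasWhitneyDual {γ : Type} (cov : γ → γ → Prop) (bot : γ) (rk : γ → ℕ) : Prop :=
  ∃ (β : Type) (_ : Finite β) (covQ : β → β → Prop) (botQ : β) (rkQ : β → ℕ),
    IsGradedPoset covQ botQ rkQ ∧ IsWhitneyDual cov bot rk covQ botQ rkQ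

/-- Isomorphism of the posets generated by two cover relations. -/
def CovPosetIso (covP : α → α → Prop) (covQ : β → β → Prop) : Prop :=
  ∃ e : α ≃ β, ∀ x y, leOf covP x y ↔ leOf covQ (e x) (e y)

end Whitney

/-! ## The label posets `Λₙʷ` and `Λₙ•` (strict order relations)

Labels are triples `(a, b, u)` with `a < b` in `[n]` and `u ∈ {0,1}` (encoded as `Bool`). -/

/-- The strict order of `Λₙʷ = Γ₁ ⊕ ⋯ ⊕ Γ_{n-1}` where `Γ_a` carries the product order
`(a,b)ᵘ ≤ (a,c)ᵛ ↔ b ≤ c ∧ u ≤ v`. -/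
def ltLw (x y : ℕ × ℕ × Bool) : Prop :=
  x.1 < y.1 ∨ (x.1 = y.1 ∧ x.2.1 ≤ y.2.1 ∧ x.2.2 ≤ y.2.2 ∧ x.2 ≠ y.2)

/-- The strict order of `Λₙ• = A₁ ⊕ C₁ ⊕ ⋯ ⊕ A_{n-1} ⊕ C_{n-1}` where `A_a` is the
antichain of the `(a,b)⁰` and `C_a` is the chain of the `(a,b)¹` ordered by `b`. -/
def ltLp (x y : ℕ × ℕ × Bool) : Prop :=
  x.1 < y.1 ∨ (x.1 = y.1 ∧
    ((x.2.2 = false ∧ y.2.2 = true) ∨ (x.2.2 = true ∧ y.2.2 = true ∧ x.2.1 < y.2.1)))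

/-! ## Pointed and weighted partition posets -/

/-- The minimum of a finite set of naturals (`0` for the empty set). -/
def minB (B : Finset ℕ) : ℕ := WithTop.untopD 0 B.min

/-- Pointed partitions of the ground set `A`: partitions of `A` into blocks, each block
carrying a distinguished (pointed) element.  A pointed block is a pair `(B, p)` with `p ∈ B`. -/
abbrev PPart (A : Finset ℕ) : Type :=
  {π : Finset (Finset ℕ × ℕ) //
    (∀ b ∈ π, b.2 ∈ b.1) ∧
    (∀ b ∈ π, ∀ b' ∈ π, b ≠ b' → Disjoint b.1 b'.1) ∧
    π.biUnion Prod.fst = A}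

/-- The cover relation of the pointed partition poset: merge two pointed blocks, the merged
block being pointed at the pointed element of one of the two. -/
def covPP {A : Finset ℕ} (π π' : PPart A) : Prop :=
  ∃ b1 ∈ π.1, ∃ b2 ∈ π.1, minB b1.1 < minB b2.1 ∧
    ∃ p : ℕ, (p = b1.2 ∨ p = b2.2) ∧
      π'.1 = insert (b1.1 ∪ b2.1, p) ((π.1.erase b1).erase b2)

/-- The labeling `λ•` (as a bare label map): the cover `u`-merging blocks `A, B` with
`min A < min B` gets the label `(min A, min B, u)`, where `u = 1` exactly when the merged
block is pointed at the pointed element of `A`. -/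
noncomputable def labPP {A : Finset ℕ} (π π' : PPart A) : ℕ × ℕ × Bool :=
  let olds := π.1 \ π'.1
  let mins := olds.image (fun b => minB b.1)
  (WithTop.untopD 0 mins.min, WithBot.unbotD 0 mins.max,
    if ∃ b ∈ olds, minB b.1 = WithTop.untopD 0 mins.min ∧ ∃ d ∈ π'.1 \ π.1, d.2 = b.2
      then true else false)

/-- The minimum of the pointed partition poset: all blocks are pointed singletons. -/
def botPP (A : Finset ℕ) : PPart A :=
  ⟨A.image fun i => ({i}, i), by
    refine ⟨?_, ?_, ?_⟩
    · intro b hb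
      obtain ⟨i, -, rfl⟩ := Finset.mem_image.1 hb
      exact Finset.mem_singleton_self i
    · intro b hb b' hb' hne
      obtain ⟨i, -, rfl⟩ := Finset.mem_image.1 hb
      obtain ⟨j, -, rfl⟩ := Finset.mem_image.1 hb'
      have hij : i ≠ j := fun h => hne (by rw [h])
      simp [Finset.disjoint_left, hij]
    · ext x
      simp⟩

/-- The rank function of the pointed partition poset. -/
def rkPP {A : Finset ℕ} (π : PPart A) : ℕ := A.card - π.1.card

/-- Weighted partitions of the ground set `A`: partitions of `A` into blocks, each block `B`
carrying a weight `v` with `0 ≤ v ≤ |B| - 1`. -/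
abbrev WPart (A : Finset ℕ) : Type :=
  {π : Finset (Finset ℕ × ℕ) //
    (∀ b ∈ π, b.2 < b.1.card) ∧
    (∀ b ∈ π, ∀ b' ∈ π, b ≠ b' → Disjoint b.1 b'.1) ∧
    π.biUnion Prod.fst = A}

/-- The cover relation of the weighted partition poset: merge blocks `A^v, B^w` into
`(A ∪ B)^(v+w+u)` for some `u ∈ {0,1}`. -/
def covWP {A : Finset ℕ} (π π' : WPart A) : Prop :=
  ∃ b1 ∈ π.1, ∃ b2 ∈ π.1, minB b1.1 < minB b2.1 ∧ ∃ u : Bool,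
    π'.1 = insert (b1.1 ∪ b2.1, b1.2 + b2.2 + (if u then 1 else 0)) ((π.1.erase b1).erase b2)

/-- The labeling `λ_w` (as a bare label map): the cover merging `A^v, B^w` with
`min A < min B` into `(A ∪ B)^(v+w+u)` gets the label `(min A, min B, u)`. -/
noncomputable def labWP {A : Finset ℕ} (π π' : WPart A) : ℕ × ℕ × Bool :=
  let olds := π.1 \ π'.1
  let mins := olds.image (fun b => minB b.1)
  (WithTop.untopD 0 mins.min, WithBot.unbotD 0 mins.max,
    if (π'.1 \ π.1).sum Prod.snd = olds.sum Prod.snd + 1 then true else false)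

/-- The minimum of the weighted partition poset: all blocks singletons of weight `0`. -/
def botWP (A : Finset ℕ) : WPart A :=
  ⟨A.image fun i => ({i}, 0), by
    refine ⟨?_, ?_, ?_⟩
    · intro b hb
      obtain ⟨i, -, rfl⟩ := Finset.mem_image.1 hb
      simp
    · intro b hb b' hb' hne
      obtain ⟨i, -, rfl⟩ := Finset.mem_image.1 hb
      obtain ⟨j, -, rfl⟩ := Finset.mem_image.1 hb'
      have hij : i ≠ j := fun h => hne (by rw [h])
      simp [Finset.disjoint_left, hij]
    · ext x
      simp⟩

/-- The rank function of the weighted partition poset. -/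
def rkWP {A : Finset ℕ} (π : WPart A) : ℕ := A.card - π.1.card
/-! ## Bicolored binary trees and Lyndon forests -/

/-- Planar binary trees with `ℕ`-labeled leaves and `Bool`-colored internal vertices
(`false` = color 0, `true` = color 1). -/
inductive BT : Type
  | leaf : ℕ → BT
  | node : Bool → BT → BT → BT
deriving DecidableEq

namespace BT

/-- The valency: the minimum leaf label of a tree. -/
def nu : BT → ℕ
  | leaf a => a
  | node _ l r => min l.nu r.nu

/-- The set of leaf labels of a tree. -/
def leaves : BT → Finset ℕ
  | leaf a => {a}
  | node _ l r => l.leaves ∪ r.leaves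

/-- The number of internal vertices of a tree. -/
def internals : BT → ℕ
  | leaf _ => 0
  | node _ l r => l.internals + r.internals + 1

/-- A tree is normalized if its leaf labels are distinct and every internal vertex has the
same valency as its left child. -/
def normalized : BT → Prop
  | leaf _ => True
  | node _ l r => l.normalized ∧ r.normalized ∧ Disjoint l.leaves r.leaves ∧ l.nu < r.nu

/-- The pointed Lyndon condition: at every internal vertex `v` with internal left child,
`color (L v) ≥ color v`, and if `color (L v) = color v = 1` then `v` is a Lyndon vertex,
i.e. `ν (R (L v)) > ν (R v)`. -/
def pLyn : BT → Prop
  | leaf _ => True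
  | node c l r => l.pLyn ∧ r.pLyn ∧
      (match l with
       | leaf _ => True
       | node c' _ r' => c ≤ c' ∧ ((c' = c ∧ c = true) → r.nu < r'.nu))

/-- The bicolored Lyndon condition: every internal vertex with internal left child is
Lyndon (`ν (R (L v)) > ν (R v)`) or satisfies `color (L v) > color v`. -/
def wLyn : BT → Prop
  | leaf _ => True
  | node c l r => l.wLyn ∧ r.wLyn ∧
      (match l with
       | leaf _ => True
       | node c' _ r' => r.nu < r'.nu ∨ c < c')

/-- The pointed element of a bicolored tree: a `1`-colored vertex keeps the point of its
left subtree and a `0`-colored vertex keeps the point of its right subtree. -/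
def ppt : BT → ℕ
  | leaf a => a
  | node c l r => if c then l.ppt else r.ppt

end BT

/-- `u`-merging of two pointed Lyndon trees: create a new root of color `u` with the two
trees as subtrees, then repeatedly slide the new vertex together with its right subtree
past its left child until the pointed Lyndon condition holds at the new vertex. -/
def mergeP (u : Bool) : BT → BT → BT
  | BT.leaf a, t2 => BT.node u (BT.leaf a) t2
  | BT.node c a b, t2 =>
      if u ≤ c ∧ ((c = true ∧ u = true) → t2.nu < b.nu)
      then BT.node u (BT.node c a b) t2
      else BT.node c (mergeP u a t2) b

/-- `u`-merging of two bicolored Lyndon trees: create a new root of color `u` with the two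
trees as subtrees, then repeatedly slide the new vertex together with its right subtree
past its left child until the bicolored Lyndon condition holds at the new vertex. -/
def mergeW (u : Bool) : BT → BT → BT
  | BT.leaf a, t2 => BT.node u (BT.leaf a) t2
  | BT.node c a b, t2 =>
      if t2.nu < b.nu ∨ u < c
      then BT.node u (BT.node c a b) t2
      else BT.node c (mergeW u a t2) b

/-- A valid forest on the ground set `[n]`, each tree normalized and satisfying `P`, the
trees having pairwise disjoint leaf sets which together cover `[n] = {1, …, n}`. -/
def ForestValid (n : ℕ) (P : BT → Prop) (F : Finset BT) : Prop :=
  (∀ t ∈ F, t.normalized ∧ P t) ∧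
  (∀ t ∈ F, ∀ t' ∈ F, t ≠ t' → Disjoint t.leaves t'.leaves) ∧
  F.biUnion BT.leaves = Finset.Icc 1 n

/-- The set of pointed Lyndon forests on `[n]`. -/
abbrev FLynP (n : ℕ) : Type := {F : Finset BT // ForestValid n BT.pLyn F}

/-- The set of bicolored Lyndon forests on `[n]`. -/
abbrev FLynW (n : ℕ) : Type := {F : Finset BT // ForestValid n BT.wLyn F}

/-- The cover relation on forests: `u`-merge two of the trees (the one with smaller minimum
leaf label going to the left). -/
def covForest (merge : Bool → BT → BT → BT) (F F' : Finset BT) : Prop :=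
  ∃ t1 ∈ F, ∃ t2 ∈ F, t1.nu < t2.nu ∧ ∃ u : Bool,
    F' = insert (merge u t1 t2) ((F.erase t1).erase t2)

/-- The cover relation of the poset of pointed Lyndon forests `FLyn_n^•`. -/
def covFP {n : ℕ} (F F' : FLynP n) : Prop := covForest mergeP F.1 F'.1

/-- The cover relation of the poset of bicolored Lyndon forests `FLyn_n^w`. -/
def covFW {n : ℕ} (F F' : FLynW n) : Prop := covForest mergeW F.1 F'.1

/-- The forest of `n` isolated leaves. -/
def botForest (n : ℕ) : Finset BT := (Finset.Icc 1 n).image BT.leaf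

theorem botForest_valid (n : ℕ) (P : BT → Prop) (hP : ∀ a, P (BT.leaf a)) :
    ForestValid n P (botForest n) := by
  refine ⟨?_, ?_, ?_⟩
  · intro t ht
    obtain ⟨i, -, rfl⟩ := Finset.mem_image.1 ht
    exact ⟨trivial, hP i⟩
  · intro t ht t' ht' hne
    obtain ⟨i, -, rfl⟩ := Finset.mem_image.1 ht
    obtain ⟨j, -, rfl⟩ := Finset.mem_image.1 ht'
    have hij : i ≠ j := fun h => hne (by rw [h])
    simp only [BT.leaves]
    simp [Finset.disjoint_left, hij]
  · ext x
    simp [botForest, BT.leaves]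

/-- The minimum of the poset of pointed Lyndon forests. -/
def botFP (n : ℕ) : FLynP n := ⟨botForest n, botForest_valid n _ fun _ => trivial⟩

/-- The minimum of the poset of bicolored Lyndon forests. -/
def botFW (n : ℕ) : FLynW n := ⟨botForest n, botForest_valid n _ fun _ => trivial⟩

/-- The rank of a forest: its total number of internal vertices. -/
def rkForest (F : Finset BT) : ℕ := F.sum BT.internals

/-- The rank function of `FLyn_n^•`. -/
def rkFP {n : ℕ} (F : FLynP n) : ℕ := rkForest F.1

/-- The rank function of `FLyn_n^w`. -/
def rkFW {n : ℕ} (F : FLynW n) : ℕ := rkForest F.1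

/-! ## The Whitney dual construction `R_λ(P)` -/

section RPoset

variable {α : Type*} {L : Type*}

/-- Swap the leftmost ascent of a word of labels. -/
noncomputable def swapFirstAscent (lt : L → L → Prop) : List L → List L
  | a :: b :: rest => if lt a b then b :: a :: rest else a :: swapFirstAscent lt (b :: rest)
  | w => w

/-- Sort a word of labels by repeatedly swapping its leftmost ascent until it is
ascent-free. -/
noncomputable def sortWord (lt : L → L → Prop) (w : List L) : List L :=
  (swapFirstAscent lt)^[w.length * w.length] w

/-- The underlying set of the Whitney dual `R_λ(P)`: pairs `(x, w)` where `w` is the label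
word of an ascent-free saturated chain from `0̂` to `x`. -/
abbrev RPoset (cov : α → α → Prop) (lab : α → α → L) (lt : L → L → Prop) (bot : α) : Type _ :=
  {q : α × List L //
    ∃ c, IsSatChain cov bot q.1 c ∧ AscFree lt (wordOf lab c) ∧ wordOf lab c = q.2}

/-- The cover relation of `R_λ(P)`: `(x, w) ⋖ (y, u)` iff `x ⋖ y` and `u` is obtained by
sorting the label of `x ⋖ y` into `w`. -/
def covR (cov : α → α → Prop) (lab : α → α → L) (lt : L → L → Prop) (bot : α)
    (p q : RPoset cov lab lt bot) : Prop :=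
  cov p.1.1 q.1.1 ∧ q.1.2 = sortWord lt (p.1.2 ++ [lab p.1.1 q.1.1])

end RPoset

/-! ## Reiner's poset of rooted spanning forests -/

/-- A rooted spanning forest on `[n]`, encoded by its parent function: `f i` is the parent
of the vertex `i` (`f i = i` for roots), vertices outside `[n]` being fixed, and every
vertex reaching a root after finitely many steps (acyclicity). -/
def SFvalid (n : ℕ) (f : ℕ → ℕ) : Prop :=
  (∀ i ∈ Finset.Icc 1 n, f i ∈ Finset.Icc 1 n) ∧
  (∀ i, i ∉ Finset.Icc 1 n → f i = i) ∧
  (∀ i, ∃ k, f^[k + 1] i = f^[k] i)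

/-- Reiner's poset `SF_n` of rooted spanning forests of the complete graph on `[n]`. -/
abbrev SF (n : ℕ) : Type := {f : ℕ → ℕ // SFvalid n f}

/-- The cover relation of `SF_n`: add an edge between the roots of two trees, one of the
two roots becoming the root of the merged tree. -/
def covSF {n : ℕ} (f g : SF n) : Prop :=
  ∃ r1 ∈ Finset.Icc 1 n, ∃ r2 ∈ Finset.Icc 1 n, r1 ≠ r2 ∧
    f.1 r1 = r1 ∧ f.1 r2 = r2 ∧
    (g.1 = Function.update f.1 r1 r2 ∨ g.1 = Function.update f.1 r2 r1)

/-- The rank of a rooted spanning forest: its number of edges. -/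
def rkSF {n : ℕ} (f : SF n) : ℕ := ((Finset.Icc 1 n).filter fun i => f.1 i ≠ i).card
/-! ## Further constructions used in particular statements -/

/-- The map `Φ` on underlying finsets: a pointed block `(B, q)` of a pointed partition
above `α` is sent to the set of minima of the `α`-blocks contained in `B`, pointed at the
minimum of the `α`-block containing `q`. -/
noncomputable def PhiMap (af : Finset (Finset ℕ × ℕ)) (pf : Finset (Finset ℕ × ℕ)) :
    Finset (Finset ℕ × ℕ) :=
  pf.image fun b =>
    ((af.filter fun c => c.1 ⊆ b.1).image fun c => minB c.1,
     WithTop.untopD 0 ((af.filter fun c => b.2 ∈ c.1).image fun c => minB c.1).min)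

/-- The expected word of labels of the unique increasing maximal chain of the interval
`[0̂, [n]^p]` of the pointed partition poset:
`(1,2)¹ ⋯ (1,n)¹` if `p = 1`, and `(1,p)⁰ (1,2)¹ ⋯ (1,p-1)¹ (1,p+1)¹ ⋯ (1,n)¹` otherwise. -/
def expectedWordP (n p : ℕ) : List (ℕ × ℕ × Bool) :=
  let base := (List.range (n - 1)).map fun i => ((1 : ℕ), i + 2, true)
  if p = 1 then base else ((1 : ℕ), p, false) :: base.erase (1, p, true)

/-- Merge two words of labels, each with non-increasing first components, into a single
word with non-increasing first components. -/
def mergeByNu : List (ℕ × ℕ × Bool) → List (ℕ × ℕ × Bool) → List (ℕ × ℕ × Bool)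
  | [], ys => ys
  | xs, [] => xs
  | x :: xs, y :: ys =>
      if y.1 ≤ x.1 then x :: mergeByNu xs (y :: ys) else y :: mergeByNu (x :: xs) ys
termination_by xs ys => xs.length + ys.length

/-- The word of labels of a tree read along the reverse-minimal linear extension of its
internal vertices: the internal vertex `v` contributes `(ν (L v), ν (R v), color v)`, the
vertices being listed with non-increasing valencies (descendants first among equal
valencies). -/
def BT.rmword : BT → List (ℕ × ℕ × Bool)
  | BT.leaf _ => []
  | BT.node c l r => mergeByNu l.rmword r.rmword ++ [(l.nu, r.nu, c)]

/-- The word of labels of the saturated chain `c(F)` associated to a forest `F`, read along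
the reverse-minimal linear extension of the internal vertices of `F`. -/
noncomputable def forestWord (F : Finset BT) : List (ℕ × ℕ × Bool) :=
  (F.toList.map BT.rmword).foldr mergeByNu []

/-- `TLyn_{n,p}^•`: pointed Lyndon trees on `[n]` whose associated chain ends at `[n]^p`,
i.e. whose tracked pointed element is `p`. -/
abbrev TLynBullet (n p : ℕ) : Type :=
  {T : BT // T.normalized ∧ T.pLyn ∧ T.leaves = Finset.Icc 1 n ∧ T.ppt = p}

/-- The labeling `λ̃` of `Πₙ•` proposed by Bellier-Millès, Delcroix-Oger and Hoffbeck: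
the cover `u`-merging blocks with minima `a < b` in a pointed partition `π` with `|π|`
blocks is labeled `(b, a + n - |π|)` if `u = 0` and `(b, b + n - |π|)` if `u = 1`. -/
noncomputable def labT (n : ℕ) {A : Finset ℕ} (π π' : PPart A) : ℕ × ℕ :=
  let olds := π.1 \ π'.1
  let mins := olds.image fun b => minB b.1
  let a := WithTop.untopD 0 mins.min
  let b := WithBot.unbotD 0 mins.max
  if ∃ c ∈ olds, minB c.1 = a ∧ ∃ d ∈ π'.1 \ π.1, d.2 = c.2
  then (b, b + n - π.1.card)
  else (b, a + n - π.1.card)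

/-- The (strict) lexicographic order on `ℕ × ℕ`. -/
def ltT (x y : ℕ × ℕ) : Prop := x.1 < y.1 ∨ (x.1 = y.1 ∧ x.2 < y.2)

/-! ### Auxiliary development -/

namespace PLaux

section Words

variable {α : Type*} {β : Type*} {L : Type*}

lemma wordOf_cons_cons (lab : α → α → L) (x y : α) (t : List α) :
    wordOf lab (x :: y :: t) = lab x y :: wordOf lab (y :: t) := rfl

lemma wordOf_map (lab : β → β → L) (f : α → β) :
    ∀ l : List α, wordOf lab (l.map f) = wordOf (fun a b => lab (f a) (f b)) l
  | [] => rfl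
  | [x] => rfl
  | x :: y :: t => by
      have := wordOf_map lab f (y :: t)
      simp only [List.map_cons] at this ⊢
      rw [wordOf_cons_cons, wordOf_cons_cons, this]

lemma wordOf_append (lab : α → α → L) :
    ∀ (c : List α) (x y : α), c.getLast? = some x →
      wordOf lab (c ++ [y]) = wordOf lab c ++ [lab x y]
  | [], x, y, h => by simp at h
  | [a], x, y, h => by
      simp only [List.getLast?_singleton, Option.some.injEq] at h
      subst h; rfl
  | a :: b :: t, x, y, h => by
      have h' : (b :: t).getLast? = some x := by
        rw [List.getLast?_cons_cons] at h; exact h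
      have := wordOf_append lab (b :: t) x y h'
      show lab a b :: wordOf lab ((b :: t) ++ [y]) = lab a b :: wordOf lab (b :: t) ++ [lab x y]
      rw [this]; rfl

end Words

section Merge

lemma mergeByNu_nil_left (ys : List (ℕ × ℕ × Bool)) : mergeByNu [] ys = ys := by
  cases ys <;> simp [mergeByNu]

lemma mergeByNu_nil_right (xs : List (ℕ × ℕ × Bool)) : mergeByNu xs [] = xs := by
  cases xs <;> simp [mergeByNu]

lemma mergeByNu_cons_cons (x y : ℕ × ℕ × Bool) (xs ys : List (ℕ × ℕ × Bool)) :
    mergeByNu (x :: xs) (y :: ys) =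
      if y.1 ≤ x.1 then x :: mergeByNu xs (y :: ys) else y :: mergeByNu (x :: xs) ys := by
  rw [mergeByNu]

lemma mem_mergeByNu : ∀ (u v : List (ℕ × ℕ × Bool)) (x : ℕ × ℕ × Bool),
    x ∈ mergeByNu u v → x ∈ u ∨ x ∈ v
  | [], v, x, h => by rw [mergeByNu_nil_left] at h; exact Or.inr h
  | u :: us, [], x, h => by rw [mergeByNu_nil_right] at h; exact Or.inl h
  | u :: us, v :: vs, x, h => by
      rw [mergeByNu_cons_cons] at h
      split_ifs at h with hc
      · rcases List.mem_cons.1 h with h | h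
        · exact Or.inl (by simp [h])
        · rcases mem_mergeByNu us (v :: vs) x h with h | h
          · exact Or.inl (List.mem_cons_of_mem _ h)
          · exact Or.inr h
      · rcases List.mem_cons.1 h with h | h
        · exact Or.inr (by simp [h])
        · rcases mem_mergeByNu (u :: us) vs x h with h | h
          · exact Or.inl h
          · exact Or.inr (List.mem_cons_of_mem _ h)
  termination_by u v => u.length + v.length

lemma mergeByNu_assoc : ∀ u v w : List (ℕ × ℕ × Bool),
    mergeByNu (mergeByNu u v) w = mergeByNu u (mergeByNu v w)
  | [], v, w => by rw [mergeByNu_nil_left, mergeByNu_nil_left]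
  | x :: xs, [], w => by rw [mergeByNu_nil_right, mergeByNu_nil_left]
  | x :: xs, y :: ys, [] => by rw [mergeByNu_nil_right, mergeByNu_nil_right]
  | x :: xs, y :: ys, z :: zs => by
      by_cases h1 : y.1 ≤ x.1 <;> by_cases h2 : z.1 ≤ y.1
      · have h3 : z.1 ≤ x.1 := le_trans h2 h1
        simp [mergeByNu_cons_cons, h1, h2, h3, mergeByNu_assoc xs (y :: ys) (z :: zs)]
      · by_cases h3 : z.1 ≤ x.1
        · simp [mergeByNu_cons_cons, h1, h2, h3, mergeByNu_assoc xs (y :: ys) (z :: zs)]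
        · have ih := mergeByNu_assoc (x :: xs) (y :: ys) zs
          simp only [mergeByNu_cons_cons, if_pos h1] at ih
          simp [mergeByNu_cons_cons, h1, h2, h3, ih]
      · simp [mergeByNu_cons_cons, h1, h2, mergeByNu_assoc (x :: xs) ys (z :: zs)]
      · have h3 : ¬ z.1 ≤ x.1 := fun h => h2 (le_trans h (le_of_not_ge h1))
        have ih := mergeByNu_assoc (x :: xs) (y :: ys) zs
        simp only [mergeByNu_cons_cons, if_neg h1] at ih
        simp [mergeByNu_cons_cons, h1, h2, h3, ih]
  termination_by u v w => u.length + v.length + w.length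

lemma mergeByNu_comm : ∀ u v : List (ℕ × ℕ × Bool),
    (∀ x ∈ u, ∀ y ∈ v, x.1 ≠ y.1) → mergeByNu u v = mergeByNu v u
  | [], v, _ => by rw [mergeByNu_nil_left, mergeByNu_nil_right]
  | x :: xs, [], _ => by rw [mergeByNu_nil_left, mergeByNu_nil_right]
  | x :: xs, y :: ys, h => by
      have hxy : x.1 ≠ y.1 := h x (by simp) y (by simp)
      rcases hxy.lt_or_gt with hlt | hlt
      · rw [mergeByNu_cons_cons, if_neg (by omega), mergeByNu_cons_cons, if_pos (le_of_lt hlt),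
          mergeByNu_comm (x :: xs) ys (fun a ha b hb => h a ha b (List.mem_cons_of_mem _ hb))]
      · rw [mergeByNu_cons_cons, if_pos (le_of_lt hlt), mergeByNu_cons_cons,
          if_neg (by omega),
          mergeByNu_comm xs (y :: ys) (fun a ha b hb => h a (List.mem_cons_of_mem _ ha) b hb)]
  termination_by u v => u.length + v.length

lemma mergeByNu_append_min : ∀ (A B : List (ℕ × ℕ × Bool)) (m : ℕ × ℕ × Bool),
    (∀ y ∈ B, m.1 < y.1) → mergeByNu (A ++ [m]) B = mergeByNu A B ++ [m]
  | A, [], m, _ => by rw [mergeByNu_nil_right, mergeByNu_nil_right]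
  | [], y :: ys, m, h => by
      rw [List.nil_append, mergeByNu_nil_left, mergeByNu_cons_cons,
        if_neg (by have := h y (by simp); omega)]
      have := mergeByNu_append_min [] ys m (fun a ha => h a (List.mem_cons_of_mem _ ha))
      rw [List.nil_append] at this
      rw [this, mergeByNu_nil_left]
      rfl
  | x :: xs, y :: ys, m, h => by
      rw [List.cons_append, mergeByNu_cons_cons]
      by_cases hc : y.1 ≤ x.1
      · rw [if_pos hc, mergeByNu_append_min xs (y :: ys) m h, mergeByNu_cons_cons, if_pos hc]
        rfl
      · rw [if_neg hc, ← List.cons_append,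
          mergeByNu_append_min (x :: xs) ys m (fun a ha => h a (List.mem_cons_of_mem _ ha)),
          mergeByNu_cons_cons, if_neg hc]
        rfl
  termination_by A B => A.length + B.length

/-- cross-distinct first components -/
def crossNe (w w' : List (ℕ × ℕ × Bool)) : Prop := ∀ x ∈ w, ∀ y ∈ w', x.1 ≠ y.1

lemma crossNe_symm : Symmetric crossNe := fun _ _ h x hx y hy => (h y hy x hx).symm

lemma foldr_mergeByNu_perm : ∀ {l₁ l₂ : List (List (ℕ × ℕ × Bool))}, l₁.Perm l₂ →
    l₁.Pairwise crossNe → l₁.foldr mergeByNu [] = l₂.foldr mergeByNu [] := by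
  intro l₁ l₂ hp
  induction hp with
  | nil => intro; rfl
  | cons x _ ih => intro hpw; simp only [List.foldr_cons]; rw [ih (List.Pairwise.of_cons hpw)]
  | swap x y t =>
      intro hpw
      simp only [List.foldr_cons]
      have hxy : crossNe y x := (List.pairwise_cons.1 hpw).1 x (by simp)
      rw [← mergeByNu_assoc, ← mergeByNu_assoc, mergeByNu_comm y x hxy]
  | trans p₁ p₂ ih₁ ih₂ =>
      intro hpw
      rw [ih₁ hpw, ih₂ ((p₁.pairwise_iff (fun h => crossNe_symm h)).1 hpw)]

end Merge

end PLaux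

namespace PLaux

section BTlemmas

lemma leaves_nonempty : ∀ t : BT, t.leaves.Nonempty
  | BT.leaf a => ⟨a, by simp [BT.leaves]⟩
  | BT.node _ l r => by
      obtain ⟨x, hx⟩ := leaves_nonempty l
      exact ⟨x, by simp [BT.leaves, hx]⟩

lemma nu_mem_leaves : ∀ t : BT, t.nu ∈ t.leaves
  | BT.leaf a => by simp [BT.leaves, BT.nu]
  | BT.node _ l r => by
      have hl := nu_mem_leaves l
      have hr := nu_mem_leaves r
      rcases le_total l.nu r.nu with h | h
      · simp [BT.leaves, BT.nu, min_eq_left h, hl]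
      · simp [BT.leaves, BT.nu, min_eq_right h, hr]

lemma nu_le_of_mem : ∀ t : BT, ∀ a ∈ t.leaves, t.nu ≤ a
  | BT.leaf b => by
      intro a ha
      simp only [BT.leaves, Finset.mem_singleton] at ha
      simp [BT.nu, ha]
  | BT.node _ l r => by
      intro a ha
      simp only [BT.leaves, Finset.mem_union] at ha
      simp only [BT.nu]
      rcases ha with ha | ha
      · exact le_trans (min_le_left _ _) (nu_le_of_mem l a ha)
      · exact le_trans (min_le_right _ _) (nu_le_of_mem r a ha)

lemma ppt_mem_leaves : ∀ t : BT, t.ppt ∈ t.leaves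
  | BT.leaf a => by simp [BT.leaves, BT.ppt]
  | BT.node c l r => by
      have hl := ppt_mem_leaves l
      have hr := ppt_mem_leaves r
      cases c <;> simp [BT.leaves, BT.ppt, hl, hr]

lemma minB_eq {B : Finset ℕ} {m : ℕ} (hm : m ∈ B) (h : ∀ a ∈ B, m ≤ a) : minB B = m := by
  have : B.min = (m : WithTop ℕ) :=
    le_antisymm (Finset.min_le hm) (Finset.le_min fun a ha => WithTop.coe_le_coe.2 (h a ha))
  rw [minB, this]
  rfl

lemma minB_leaves (t : BT) : minB t.leaves = t.nu :=
  minB_eq (nu_mem_leaves t) (nu_le_of_mem t)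

lemma internals_zero_iff (t : BT) : t.internals = 0 ↔ ∃ a, t = BT.leaf a := by
  cases t <;> simp [BT.internals]

lemma normalized_node {c : Bool} {l r : BT} (h : (BT.node c l r).normalized) :
    l.normalized ∧ r.normalized ∧ Disjoint l.leaves r.leaves ∧ l.nu < r.nu := h

lemma pLyn_node {c : Bool} {l r : BT} (h : (BT.node c l r).pLyn) :
    l.pLyn ∧ r.pLyn := ⟨h.1, h.2.1⟩

lemma nu_node (c : Bool) (l r : BT) (h : l.nu < r.nu) : (BT.node c l r).nu = l.nu := by
  simp [BT.nu, min_eq_left (le_of_lt h)]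

lemma leaves_node (c : Bool) (l r : BT) : (BT.node c l r).leaves = l.leaves ∪ r.leaves := rfl

end BTlemmas

section Forest

variable {n : ℕ} {P : BT → Prop} {F : Finset BT}

/-- the non-leaf trees of a forest -/
noncomputable def nls (F : Finset BT) : Finset BT := F.filter fun t => ∀ a, t ≠ BT.leaf a

lemma mem_nls {t : BT} : t ∈ nls F ↔ t ∈ F ∧ ∀ a, t ≠ BT.leaf a := by simp [nls]

lemma not_leaf_node {t : BT} (h : ∀ a, t ≠ BT.leaf a) : ∃ c l r, t = BT.node c l r := by
  cases t with
  | leaf a => exact absurd rfl (h a)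
  | node c l r => exact ⟨c, l, r, rfl⟩

lemma nls_empty_iff : nls F = ∅ ↔ rkForest F = 0 := by
  constructor
  · intro h
    rw [rkForest]
    apply Finset.sum_eq_zero
    intro t ht
    rw [internals_zero_iff]
    by_contra hc
    push_neg at hc
    have : t ∈ nls F := mem_nls.2 ⟨ht, fun a he => hc a he⟩
    simp [h] at this
  · intro h
    rw [rkForest] at h
    rw [Finset.eq_empty_iff_forall_notMem]
    intro t ht
    obtain ⟨ht1, ht2⟩ := mem_nls.1 ht
    have h0 : t.internals = 0 := Finset.sum_eq_zero_iff.1 h t ht1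
    rw [internals_zero_iff] at h0
    obtain ⟨a, rfl⟩ := h0
    exact ht2 a rfl

lemma leaves_ne_of_forest (hF : ForestValid n P F) {t t' : BT} (ht : t ∈ F) (ht' : t' ∈ F)
    (hne : t ≠ t') : t.leaves ≠ t'.leaves := by
  intro h
  obtain ⟨x, hx⟩ := leaves_nonempty t
  exact Finset.disjoint_left.1 (hF.2.1 t ht t' ht' hne) hx (h ▸ hx)

lemma nu_inj_of_forest (hF : ForestValid n P F) {t t' : BT} (ht : t ∈ F) (ht' : t' ∈ F)
    (hne : t ≠ t') : t.nu ≠ t'.nu := by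
  intro h
  exact Finset.disjoint_left.1 (hF.2.1 t ht t' ht' hne) (nu_mem_leaves t)
    (h ▸ nu_mem_leaves t')

lemma eq_botForest (hF : ForestValid n P F) (h0 : nls F = ∅) : F = botForest n := by
  have hleaf : ∀ t ∈ F, ∃ a, t = BT.leaf a := by
    intro t ht
    by_contra h
    push_neg at h
    have : t ∈ nls F := mem_nls.2 ⟨ht, fun a he => h a he⟩
    simp [h0] at this
  ext t
  simp only [botForest, Finset.mem_image]
  constructor
  · intro ht
    obtain ⟨a, rfl⟩ := hleaf t ht
    refine ⟨a, ?_, rfl⟩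
    have : a ∈ F.biUnion BT.leaves := Finset.mem_biUnion.2 ⟨_, ht, by simp [BT.leaves]⟩
    rwa [hF.2.2] at this
  · rintro ⟨a, ha, rfl⟩
    have : a ∈ F.biUnion BT.leaves := by rw [hF.2.2]; exact ha
    obtain ⟨s, hs, hmem⟩ := Finset.mem_biUnion.1 this
    obtain ⟨b, rfl⟩ := hleaf s hs
    simp only [BT.leaves, Finset.mem_singleton] at hmem
    subst hmem; exact hs

/-- the image of a forest as a raw pointed partition -/
noncomputable def phiF (F : Finset BT) : Finset (Finset ℕ × ℕ) :=
  F.image fun t => (t.leaves, t.ppt)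

lemma mem_phiF {b : Finset ℕ × ℕ} : b ∈ phiF F ↔ ∃ t ∈ F, (t.leaves, t.ppt) = b := by
  simp [phiF]

lemma phiF_valid (hF : ForestValid n P F) :
    (∀ b ∈ phiF F, b.2 ∈ b.1) ∧
    (∀ b ∈ phiF F, ∀ b' ∈ phiF F, b ≠ b' → Disjoint b.1 b'.1) ∧
    (phiF F).biUnion Prod.fst = Finset.Icc 1 n := by
  refine ⟨?_, ?_, ?_⟩
  · intro b hb
    obtain ⟨t, _, rfl⟩ := mem_phiF.1 hb
    exact ppt_mem_leaves t
  · intro b hb b' hb' hne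
    obtain ⟨t, ht, rfl⟩ := mem_phiF.1 hb
    obtain ⟨t', ht', rfl⟩ := mem_phiF.1 hb'
    have : t ≠ t' := fun h => hne (by rw [h])
    exact hF.2.1 t ht t' ht' this
  · ext x
    rw [← hF.2.2]
    simp [phiF]

lemma phi_inj_of_forest (hF : ForestValid n P F) {t t' : BT} (ht : t ∈ F) (ht' : t' ∈ F)
    (h : (t.leaves, t.ppt) = (t'.leaves, t'.ppt)) : t = t' := by
  by_contra hne
  exact leaves_ne_of_forest hF ht ht' hne (congrArg Prod.fst h)

end Forest

end PLaux

namespace PLaux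

section Peel

variable {n : ℕ} {P : BT → Prop} {F : Finset BT}

/-- the non-leaf tree of minimal valency -/
noncomputable def minTree (F : Finset BT) : BT :=
  if h : (nls F).Nonempty then (Finset.exists_min_image (nls F) BT.nu h).choose
  else BT.leaf 0

lemma minTree_spec (h : (nls F).Nonempty) :
    minTree F ∈ nls F ∧ ∀ t ∈ nls F, (minTree F).nu ≤ t.nu := by
  rw [minTree, dif_pos h]
  obtain ⟨h1, h2⟩ := (Finset.exists_min_image (nls F) BT.nu h).choose_spec
  exact ⟨h1, h2⟩

lemma minTree_node (h : (nls F).Nonempty) : ∃ c l r, minTree F = BT.node c l r :=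
  not_leaf_node (mem_nls.1 (minTree_spec h).1).2

/-- unique tree of minimal valency among the non-leaf trees -/
lemma minTree_eq (hF : ForestValid n P F) (h : (nls F).Nonempty) {t : BT}
    (ht : t ∈ nls F) (hmin : ∀ s ∈ nls F, s ≠ t → t.nu < s.nu) : minTree F = t := by
  by_contra hne
  have h1 := (minTree_spec h).2 t ht
  have h2 := hmin _ (minTree_spec h).1 hne
  omega

noncomputable def peel (F : Finset BT) : Finset BT :=
  match minTree F with
  | BT.leaf _ => F
  | BT.node _ l r => insert l (insert r (F.erase (minTree F)))

lemma peel_eq {c : Bool} {l r : BT} (hmt : minTree F = BT.node c l r) :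
    peel F = insert l (insert r (F.erase (BT.node c l r))) := by
  unfold peel
  rw [hmt]

noncomputable def fchain : ℕ → Finset BT → List (Finset BT)
  | 0, F => [F]
  | k+1, F => if (nls F).Nonempty then fchain k (peel F) ++ [F] else [F]

/-- A bundle of facts about the decomposition of a forest at its minimal non-leaf tree. -/
structure PeelFacts (n : ℕ) (F : Finset BT) (c : Bool) (l r : BT) : Prop where
  tmem : BT.node c l r ∈ F
  hnorm : (BT.node c l r).normalized
  hplyn : (BT.node c l r).pLyn
  lnotmem : l ∉ F
  rnotmem : r ∉ F
  lner : l ≠ r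
  hmin : ∀ s ∈ nls F, s ≠ BT.node c l r → l.nu < s.nu

lemma child_ne_node (c : Bool) (l r : BT) (hd : Disjoint l.leaves r.leaves) :
    l ≠ BT.node c l r ∧ r ≠ BT.node c l r := by
  constructor
  · intro h
    have : l.leaves = l.leaves ∪ r.leaves := by
      conv_lhs => rw [h]
      rfl
    obtain ⟨x, hx⟩ := leaves_nonempty r
    have hxl : x ∈ l.leaves := by rw [this]; simp [hx]
    exact Finset.disjoint_left.1 hd hxl hx
  · intro h
    have : r.leaves = l.leaves ∪ r.leaves := by
      conv_lhs => rw [h]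
      rfl
    obtain ⟨x, hx⟩ := leaves_nonempty l
    have hxr : x ∈ r.leaves := by rw [this]; simp [hx]
    exact Finset.disjoint_left.1 hd hx hxr

lemma peel_facts (hF : ForestValid n BT.pLyn F) (h : (nls F).Nonempty) {c : Bool} {l r : BT}
    (hmt : minTree F = BT.node c l r) : PeelFacts n F c l r := by
  have hmem : BT.node c l r ∈ F := (mem_nls.1 (hmt ▸ (minTree_spec h).1)).1
  have hnorm : (BT.node c l r).normalized := (hF.1 _ hmem).1
  have hplyn : (BT.node c l r).pLyn := (hF.1 _ hmem).2
  obtain ⟨hln, hrn, hd, hlr⟩ := normalized_node hnorm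
  obtain ⟨hl_ne, hr_ne⟩ := child_ne_node c l r hd
  have hsubl : l.leaves ⊆ (BT.node c l r).leaves := by
    rw [leaves_node]; exact Finset.subset_union_left
  have hsubr : r.leaves ⊆ (BT.node c l r).leaves := by
    rw [leaves_node]; exact Finset.subset_union_right
  have lnotmem : l ∉ F := by
    intro hl
    have hdisj := hF.2.1 l hl _ hmem hl_ne
    obtain ⟨x, hx⟩ := leaves_nonempty l
    exact Finset.disjoint_left.1 hdisj hx (hsubl hx)
  have rnotmem : r ∉ F := by
    intro hr
    have hdisj := hF.2.1 r hr _ hmem hr_ne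
    obtain ⟨x, hx⟩ := leaves_nonempty r
    exact Finset.disjoint_left.1 hdisj hx (hsubr hx)
  have lner : l ≠ r := by
    intro hlr'
    obtain ⟨x, hx⟩ := leaves_nonempty l
    exact Finset.disjoint_left.1 hd hx (hlr' ▸ hx)
  refine ⟨hmem, hnorm, hplyn, lnotmem, rnotmem, lner, ?_⟩
  intro s hs hne
  have h1 := (minTree_spec h).2 s hs
  rw [hmt, nu_node c l r hlr] at h1
  have h2 : s.nu ≠ l.nu := by
    intro he
    have hsF : s ∈ F := (mem_nls.1 hs).1
    have := nu_inj_of_forest hF hsF hmem (hne ∘ id)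
    rw [nu_node c l r hlr] at this
    exact this he
  omega

lemma mem_peel {c : Bool} {l r : BT} (hmt : minTree F = BT.node c l r) {s : BT} :
    s ∈ peel F ↔ s = l ∨ s = r ∨ (s ∈ F ∧ s ≠ BT.node c l r) := by
  rw [peel_eq hmt]
  simp only [Finset.mem_insert, Finset.mem_erase]
  tauto

lemma peel_valid (hF : ForestValid n BT.pLyn F) (h : (nls F).Nonempty) {c : Bool} {l r : BT}
    (hmt : minTree F = BT.node c l r) : ForestValid n BT.pLyn (peel F) := by
  obtain pf := peel_facts hF h hmt
  obtain ⟨hln, hrn, hd, hlr⟩ := normalized_node pf.hnorm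
  obtain ⟨hlp, hrp⟩ := pLyn_node pf.hplyn
  have hsubl : l.leaves ⊆ (BT.node c l r).leaves := by
    rw [leaves_node]; exact Finset.subset_union_left
  have hsubr : r.leaves ⊆ (BT.node c l r).leaves := by
    rw [leaves_node]; exact Finset.subset_union_right
  have hdisjother : ∀ s ∈ F, s ≠ BT.node c l r → Disjoint (BT.node c l r).leaves s.leaves :=
    fun s hs hne => hF.2.1 _ pf.tmem s hs (Ne.symm hne)
  refine ⟨?_, ?_, ?_⟩
  · intro t ht
    rcases (mem_peel hmt).1 ht with rfl | rfl | ⟨htF, _⟩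
    · exact ⟨hln, hlp⟩
    · exact ⟨hrn, hrp⟩
    · exact hF.1 t htF
  · intro t ht t' ht' hne
    rcases (mem_peel hmt).1 ht with rfl | rfl | ⟨htF, htne⟩ <;>
      rcases (mem_peel hmt).1 ht' with rfl | rfl | ⟨ht'F, ht'ne⟩
    · exact absurd rfl hne
    · exact hd
    · exact ((hdisjother _ ht'F ht'ne).mono_left hsubl).symm.symm
    · exact hd.symm
    · exact absurd rfl hne
    · exact ((hdisjother _ ht'F ht'ne).mono_left hsubr).symm.symm
    · exact ((hdisjother _ htF htne).mono_left hsubl).symm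
    · exact ((hdisjother _ htF htne).mono_left hsubr).symm
    · exact hF.2.1 t htF t' ht'F hne
  · ext x
    rw [← hF.2.2]
    simp only [Finset.mem_biUnion]
    constructor
    · rintro ⟨s, hs, hx⟩
      rcases (mem_peel hmt).1 hs with rfl | rfl | ⟨hsF, _⟩
      · exact ⟨_, pf.tmem, hsubl hx⟩
      · exact ⟨_, pf.tmem, hsubr hx⟩
      · exact ⟨s, hsF, hx⟩
    · rintro ⟨s, hs, hx⟩
      by_cases hse : s = BT.node c l r
      · subst hse
        rw [leaves_node] at hx
        rcases Finset.mem_union.1 hx with hx | hx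
        · exact ⟨l, (mem_peel hmt).2 (Or.inl rfl), hx⟩
        · exact ⟨r, (mem_peel hmt).2 (Or.inr (Or.inl rfl)), hx⟩
      · exact ⟨s, (mem_peel hmt).2 (Or.inr (Or.inr ⟨hs, hse⟩)), hx⟩

lemma rk_peel (hF : ForestValid n BT.pLyn F) (h : (nls F).Nonempty) {c : Bool} {l r : BT}
    (hmt : minTree F = BT.node c l r) : rkForest (peel F) + 1 = rkForest F := by
  obtain pf := peel_facts hF h hmt
  have h1 : rkForest F = (BT.node c l r).internals + rkForest (F.erase (BT.node c l r)) := by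
    rw [rkForest, rkForest, Finset.add_sum_erase _ _ pf.tmem]
  have hrnotmem : r ∉ F.erase (BT.node c l r) := fun hmem => pf.rnotmem (Finset.mem_of_mem_erase hmem)
  have hlnotmem : l ∉ insert r (F.erase (BT.node c l r)) := by
    simp only [Finset.mem_insert]
    rintro (rfl | hmem)
    · exact pf.lner rfl
    · exact pf.lnotmem (Finset.mem_of_mem_erase hmem)
  have h2 : rkForest (peel F) =
      l.internals + (r.internals + rkForest (F.erase (BT.node c l r))) := by
    rw [peel_eq hmt, rkForest, Finset.sum_insert hlnotmem, Finset.sum_insert hrnotmem]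
    rfl
  rw [h1, h2]
  show _ = BT.internals (BT.node c l r) + _
  rw [BT.internals]
  omega

end Peel

end PLaux

namespace PLaux

section Labels

/-- raw version of the labeling `labPP` -/
noncomputable def labRaw (s s' : Finset (Finset ℕ × ℕ)) : ℕ × ℕ × Bool :=
  let olds := s \ s'
  let mins := olds.image (fun b => minB b.1)
  (WithTop.untopD 0 mins.min, WithBot.unbotD 0 mins.max,
    if ∃ b ∈ olds, minB b.1 = WithTop.untopD 0 mins.min ∧ ∃ d ∈ s' \ s, d.2 = b.2
      then true else false)

lemma labPP_eq_labRaw {A : Finset ℕ} (π π' : PPart A) : labPP π π' = labRaw π.1 π'.1 := rfl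

/-- raw version of the cover relation `covPP` -/
def covRaw (s s' : Finset (Finset ℕ × ℕ)) : Prop :=
  ∃ b1 ∈ s, ∃ b2 ∈ s, minB b1.1 < minB b2.1 ∧
    ∃ p : ℕ, (p = b1.2 ∨ p = b2.2) ∧ s' = insert (b1.1 ∪ b2.1, p) ((s.erase b1).erase b2)

lemma covPP_iff_covRaw {A : Finset ℕ} (π π' : PPart A) : covPP π π' ↔ covRaw π.1 π'.1 :=
  Iff.rfl

/-- raw partition validity -/
def RawPart (s : Finset (Finset ℕ × ℕ)) : Prop :=
  (∀ b ∈ s, b.2 ∈ b.1) ∧ ∀ b ∈ s, ∀ b' ∈ s, b ≠ b' → Disjoint b.1 b'.1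

section LabMerge

variable {s s' : Finset (Finset ℕ × ℕ)} {b1 b2 : Finset ℕ × ℕ} {p : ℕ}

lemma merge_setup (hs : RawPart s) (hb1 : b1 ∈ s) (hb2 : b2 ∈ s) (hne : b1 ≠ b2)
    (hs' : s' = insert (b1.1 ∪ b2.1, p) ((s.erase b1).erase b2)) :
    s \ s' = {b1, b2} ∧ s' \ s = {(b1.1 ∪ b2.1, p)} := by
  have hb1ne : b1.1.Nonempty := ⟨b1.2, hs.1 b1 hb1⟩
  have hb2ne : b2.1.Nonempty := ⟨b2.2, hs.1 b2 hb2⟩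
  have hdisj : Disjoint b1.1 b2.1 := hs.2 b1 hb1 b2 hb2 hne
  have hmne : ∀ x ∈ s, x ≠ (b1.1 ∪ b2.1, p) := by
    intro x hx he
    by_cases hxb1 : x = b1
    · subst hxb1
      obtain ⟨y, hy⟩ := hb2ne
      have hyx : y ∈ x.1 := by rw [he]; exact Finset.mem_union_right _ hy
      exact Finset.disjoint_right.1 hdisj hy hyx
    · have hd := hs.2 x hx b1 hb1 hxb1
      obtain ⟨y, hy⟩ := hb1ne
      have hyx : y ∈ x.1 := by rw [he]; exact Finset.mem_union_left _ hy
      exact Finset.disjoint_left.1 hd hyx hy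
  constructor
  · ext x
    simp only [Finset.mem_sdiff, hs', Finset.mem_insert, Finset.mem_erase,
      Finset.mem_singleton]
    constructor
    · rintro ⟨hxs, hx⟩
      by_contra hc
      push_neg at hc
      exact hx (Or.inr ⟨hc.2, hc.1, hxs⟩)
    · rintro (rfl | rfl)
      · refine ⟨hb1, ?_⟩
        rintro (h | ⟨h1, h2, h3⟩)
        · exact hmne _ hb1 h
        · exact h2 rfl
      · refine ⟨hb2, ?_⟩
        rintro (h | ⟨h1, h2, h3⟩)
        · exact hmne _ hb2 h
        · exact h1 rfl
  · ext x
    simp only [Finset.mem_sdiff, hs', Finset.mem_insert, Finset.mem_erase,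
      Finset.mem_singleton]
    constructor
    · rintro ⟨rfl | ⟨-, -, hxs⟩, hx⟩
      · rfl
      · exact absurd hxs hx
    · rintro rfl
      exact ⟨Or.inl rfl, fun hc => hmne _ hc rfl⟩

lemma pts_ne (hs : RawPart s) (hb1 : b1 ∈ s) (hb2 : b2 ∈ s) (hne : b1 ≠ b2) :
    b1.2 ≠ b2.2 := by
  intro he
  have := Finset.disjoint_left.1 (hs.2 b1 hb1 b2 hb2 hne) (hs.1 b1 hb1)
  rw [he] at this
  exact this (hs.1 b2 hb2)

lemma labRaw_merge (hs : RawPart s) (hb1 : b1 ∈ s) (hb2 : b2 ∈ s)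
    (hmin : minB b1.1 < minB b2.1) (hp : p = b1.2 ∨ p = b2.2)
    (hs' : s' = insert (b1.1 ∪ b2.1, p) ((s.erase b1).erase b2)) :
    labRaw s s' = (minB b1.1, minB b2.1, if p = b1.2 then true else false) := by
  have hne : b1 ≠ b2 := by
    intro he; rw [he] at hmin; omega
  obtain ⟨holds, hnews⟩ := merge_setup hs hb1 hb2 hne hs'
  simp only [labRaw]
  rw [holds, hnews]
  have hmins : ({b1, b2} : Finset (Finset ℕ × ℕ)).image (fun b => minB b.1) =
      {minB b1.1, minB b2.1} := by
    rw [show ({b1, b2} : Finset (Finset ℕ × ℕ)) = insert b1 {b2} from rfl,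
      Finset.image_insert, Finset.image_singleton]
  have hminv : (({b1, b2} : Finset (Finset ℕ × ℕ)).image (fun b => minB b.1)).min =
      (minB b1.1 : WithTop ℕ) := by
    rw [hmins]
    apply le_antisymm
    · exact Finset.min_le (by simp)
    · apply Finset.le_min
      intro y hy
      simp only [Finset.mem_insert, Finset.mem_singleton] at hy
      rcases hy with rfl | rfl
      · exact le_refl _
      · exact WithTop.coe_le_coe.2 (le_of_lt hmin)
  have hmaxv : (({b1, b2} : Finset (Finset ℕ × ℕ)).image (fun b => minB b.1)).max =
      (minB b2.1 : WithBot ℕ) := by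
    rw [hmins]
    apply le_antisymm
    · apply Finset.max_le
      intro y hy
      simp only [Finset.mem_insert, Finset.mem_singleton] at hy
      rcases hy with rfl | rfl
      · exact WithBot.coe_le_coe.2 (le_of_lt hmin)
      · exact le_refl _
    · exact Finset.le_max (by simp)
  rw [hminv, hmaxv]
  have huntop : WithTop.untopD 0 ((minB b1.1 : ℕ) : WithTop ℕ) = minB b1.1 := rfl
  have hunbot : WithBot.unbotD 0 ((minB b2.1 : ℕ) : WithBot ℕ) = minB b2.1 := rfl
  simp only [Prod.mk.injEq]
  refine ⟨huntop, hunbot, ?_⟩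
  by_cases hc : p = b1.2
  · rw [if_pos hc, if_pos ?_]
    exact ⟨b1, by simp, huntop.symm, (b1.1 ∪ b2.1, p), by simp, hc⟩
  · rw [if_neg hc, if_neg ?_]
    rintro ⟨bb, hbb, h1, d, hd, h2⟩
    simp only [Finset.mem_insert, Finset.mem_singleton] at hbb hd
    subst hd
    rcases hbb with rfl | rfl
    · exact hc h2
    · rw [huntop] at h1
      omega

end LabMerge

end Labels

section PhiMerge

variable {n : ℕ} {P : BT → Prop} {F : Finset BT}

lemma phiF_merge (hF : ForestValid n P F) {t1 t2 : BT} (ht1 : t1 ∈ F) (ht2 : t2 ∈ F)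
    (hne : t1 ≠ t2) (u : Bool) :
    phiF (insert (BT.node u t1 t2) ((F.erase t1).erase t2)) =
      insert (t1.leaves ∪ t2.leaves, (BT.node u t1 t2).ppt)
        (((phiF F).erase (t1.leaves, t1.ppt)).erase (t2.leaves, t2.ppt)) := by
  ext b
  constructor
  · intro hb
    obtain ⟨s, hs, rfl⟩ := mem_phiF.1 hb
    rcases Finset.mem_insert.1 hs with rfl | hs'
    · refine Finset.mem_insert.2 (Or.inl ?_)
      rw [leaves_node]
    · have hsF : s ∈ F := Finset.mem_of_mem_erase (Finset.mem_of_mem_erase hs')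
      have hsne2 : s ≠ t2 := Finset.ne_of_mem_erase hs'
      have hsne1 : s ≠ t1 := Finset.ne_of_mem_erase (Finset.mem_of_mem_erase hs')
      refine Finset.mem_insert.2 (Or.inr (Finset.mem_erase.2 ⟨?_, Finset.mem_erase.2
        ⟨?_, mem_phiF.2 ⟨s, hsF, rfl⟩⟩⟩))
      · intro h; exact hsne2 (phi_inj_of_forest hF hsF ht2 h)
      · intro h; exact hsne1 (phi_inj_of_forest hF hsF ht1 h)
  · intro hb
    rcases Finset.mem_insert.1 hb with rfl | hb'
    · refine mem_phiF.2 ⟨BT.node u t1 t2, Finset.mem_insert_self _ _, ?_⟩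
      rw [leaves_node]
    · have hne2 := Finset.ne_of_mem_erase hb'
      have hb'' := Finset.mem_of_mem_erase hb'
      have hne1 := Finset.ne_of_mem_erase hb''
      obtain ⟨s, hsF, rfl⟩ := mem_phiF.1 (Finset.mem_of_mem_erase hb'')
      refine mem_phiF.2 ⟨s, ?_, rfl⟩
      refine Finset.mem_insert.2 (Or.inr (Finset.mem_erase.2 ⟨?_, Finset.mem_erase.2
        ⟨?_, hsF⟩⟩))
      · intro h; exact hne2 (by rw [h])
      · intro h; exact hne1 (by rw [h])

lemma peel_erase_eq {c : Bool} {l r : BT} (hF : ForestValid n BT.pLyn F)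
    (h : (nls F).Nonempty) (hmt : minTree F = BT.node c l r) :
    ((peel F).erase l).erase r = F.erase (BT.node c l r) := by
  obtain pf := peel_facts hF h hmt
  have hrE : r ∉ F.erase (BT.node c l r) := fun hm => pf.rnotmem (Finset.mem_of_mem_erase hm)
  have hlE : l ∉ insert r (F.erase (BT.node c l r)) := by
    simp only [Finset.mem_insert]
    rintro (rfl | hm)
    · exact pf.lner rfl
    · exact pf.lnotmem (Finset.mem_of_mem_erase hm)
  rw [peel_eq hmt, Finset.erase_insert hlE, Finset.erase_insert hrE]

lemma insert_peel_eq {c : Bool} {l r : BT} (hF : ForestValid n BT.pLyn F)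
    (h : (nls F).Nonempty) (hmt : minTree F = BT.node c l r) :
    insert (BT.node c l r) (((peel F).erase l).erase r) = F := by
  rw [peel_erase_eq hF h hmt, Finset.insert_erase (peel_facts hF h hmt).tmem]

end PhiMerge

section Rmword

variable {n : ℕ} {P : BT → Prop} {F : Finset BT}

lemma mem_rmword : ∀ (t : BT) (x : ℕ × ℕ × Bool), x ∈ t.rmword → x.1 ∈ t.leaves
  | BT.leaf a, x, h => by simp [BT.rmword] at h
  | BT.node c l r, x, h => by
      rw [BT.rmword] at h
      rcases List.mem_append.1 h with h | h
      · rcases mem_mergeByNu _ _ _ h with h | h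
        · exact Finset.mem_union_left _ (mem_rmword l x h)
        · exact Finset.mem_union_right _ (mem_rmword r x h)
      · simp only [List.mem_singleton] at h
        subst h
        exact Finset.mem_union_left _ (nu_mem_leaves l)

lemma rmword_ne_nil_nonleaf : ∀ (t : BT) (x : ℕ × ℕ × Bool), x ∈ t.rmword →
    ∀ a, t ≠ BT.leaf a := by
  intro t x h a he
  subst he
  simp [BT.rmword] at h

lemma forestWord_nil (h : ∀ t ∈ F, ∃ a, t = BT.leaf a) : forestWord F = [] := by
  rw [forestWord]
  have : ∀ L : List BT, (∀ t ∈ L, ∃ a, t = BT.leaf a) →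
      (L.map BT.rmword).foldr mergeByNu [] = [] := by
    intro L
    induction L with
    | nil => intro; rfl
    | cons hd tl ih =>
        intro hL
        obtain ⟨a, rfl⟩ := hL hd (by simp)
        simp only [List.map_cons, List.foldr_cons]
        rw [ih (fun t ht => hL t (by simp [ht])), show (BT.leaf a).rmword = [] from rfl,
          mergeByNu_nil_left]
  exact this F.toList (fun t ht => h t (Finset.mem_toList.1 ht))

lemma mem_forestWord (x : ℕ × ℕ × Bool) (h : x ∈ forestWord F) : ∃ t ∈ F, x ∈ t.rmword := by
  rw [forestWord] at h
  have : ∀ L : List BT, x ∈ (L.map BT.rmword).foldr mergeByNu [] → ∃ t ∈ L, x ∈ t.rmword := by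
    intro L
    induction L with
    | nil => intro h; simp at h
    | cons hd tl ih =>
        intro h
        simp only [List.map_cons, List.foldr_cons] at h
        rcases mem_mergeByNu _ _ _ h with h | h
        · exact ⟨hd, by simp, h⟩
        · obtain ⟨t, ht, hx⟩ := ih h
          exact ⟨t, by simp [ht], hx⟩
  obtain ⟨t, ht, hx⟩ := this F.toList h
  exact ⟨t, Finset.mem_toList.1 ht, hx⟩

lemma forestWord_insert {t : BT} (htF : t ∉ F)
    (hdisj : ∀ a ∈ insert t F, ∀ b ∈ insert t F, a ≠ b → Disjoint a.leaves b.leaves) :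
    forestWord (insert t F) = mergeByNu t.rmword (forestWord F) := by
  have hperm : (insert t F).toList.Perm (t :: F.toList) := Finset.toList_insert htF
  have hperm2 : ((insert t F).toList.map BT.rmword).Perm
      ((t :: F.toList).map BT.rmword) := hperm.map _
  have hnd : (insert t F).toList.Pairwise (· ≠ ·) := Finset.nodup_toList _
  have hpw : ((insert t F).toList.map BT.rmword).Pairwise crossNe := by
    rw [List.pairwise_map]
    refine hnd.imp_of_mem ?_
    intro a b ha hb hne x hx y hy he
    exact Finset.disjoint_left.1
      (hdisj a (Finset.mem_toList.1 ha) b (Finset.mem_toList.1 hb) hne)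
      (mem_rmword a x hx) (he ▸ mem_rmword b y hy)
  rw [forestWord, foldr_mergeByNu_perm hperm2 hpw]
  simp only [List.map_cons, List.foldr_cons]
  rfl

lemma forestWord_peel (hF : ForestValid n BT.pLyn F) (h : (nls F).Nonempty) {c : Bool}
    {l r : BT} (hmt : minTree F = BT.node c l r) :
    forestWord F = forestWord (peel F) ++ [(l.nu, r.nu, c)] := by
  obtain pf := peel_facts hF h hmt
  obtain ⟨hln, hrn, hd, hlr⟩ := normalized_node pf.hnorm
  set E := F.erase (BT.node c l r) with hE
  -- step 1 : forestWord F = merge (rmword t*) (forestWord E)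
  have hdisjF : ∀ a ∈ F, ∀ b ∈ F, a ≠ b → Disjoint a.leaves b.leaves := hF.2.1
  have hGvalid := peel_valid hF h hmt
  have hdisjG : ∀ a ∈ peel F, ∀ b ∈ peel F, a ≠ b → Disjoint a.leaves b.leaves := hGvalid.2.1
  have h1 : forestWord F = mergeByNu (BT.node c l r).rmword (forestWord E) := by
    have hFi : F = insert (BT.node c l r) E := (Finset.insert_erase pf.tmem).symm
    rw [hFi] at hdisjF ⊢
    exact forestWord_insert (Finset.notMem_erase _ _) hdisjF
  -- step 2 : forestWord (peel F)
  have hrE : r ∉ E := fun hm => pf.rnotmem (Finset.mem_of_mem_erase hm)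
  have hlE : l ∉ insert r E := by
    simp only [Finset.mem_insert]
    rintro (rfl | hm)
    · exact pf.lner rfl
    · exact pf.lnotmem (Finset.mem_of_mem_erase hm)
  have hsub1 : insert r E ⊆ peel F := by
    rw [peel_eq hmt]
    exact Finset.subset_insert _ _
  have h2 : forestWord (peel F) = mergeByNu l.rmword (mergeByNu r.rmword (forestWord E)) := by
    rw [peel_eq hmt, ← hE]
    rw [forestWord_insert hlE (fun a ha b hb => hdisjG a (by rw [peel_eq hmt, ← hE]; exact ha)
      b (by rw [peel_eq hmt, ← hE]; exact hb))]
    rw [forestWord_insert hrE (fun a ha b hb => hdisjG a (hsub1 ha) b (hsub1 hb))]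
  -- step 3 : letters of forestWord E are large
  have h3 : ∀ y ∈ forestWord E, l.nu < y.1 := by
    intro y hy
    obtain ⟨s, hsE, hys⟩ := mem_forestWord y hy
    have hsF : s ∈ F := Finset.mem_of_mem_erase hsE
    have hsnl : s ∈ nls F := mem_nls.2 ⟨hsF, rmword_ne_nil_nonleaf s y hys⟩
    have hslt := pf.hmin s hsnl (Finset.ne_of_mem_erase hsE)
    have := nu_le_of_mem s _ (mem_rmword s y hys)
    omega
  rw [h1, h2, show (BT.node c l r).rmword =
    mergeByNu l.rmword r.rmword ++ [(l.nu, r.nu, c)] from rfl,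
    mergeByNu_append_min _ _ _ h3, mergeByNu_assoc]

end Rmword

end PLaux

namespace PLaux

section Forward

variable {n : ℕ} {F : Finset BT}

lemma forestWord_ne_nil_nls (h : forestWord F ≠ []) : (nls F).Nonempty := by
  obtain ⟨x, hx⟩ := List.exists_mem_of_ne_nil _ h
  obtain ⟨t, htF, hxt⟩ := mem_forestWord x hx
  exact ⟨t, mem_nls.2 ⟨htF, rmword_ne_nil_nonleaf t x hxt⟩⟩

lemma nls_not_empty_forestWord (h0 : nls F = ∅) : forestWord F = [] := by
  apply forestWord_nil
  intro t ht
  by_contra hc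
  push_neg at hc
  have : t ∈ nls F := mem_nls.2 ⟨ht, fun a he => hc a he⟩
  simp [h0] at this

/-- the minimal non-leaf tree of `peel F` when the left child is internal -/
lemma minTree_peel_left (hF : ForestValid n BT.pLyn F) (h : (nls F).Nonempty)
    {c cl : Bool} {al bl r : BT} (hmt : minTree F = BT.node c (BT.node cl al bl) r) :
    minTree (peel F) = BT.node cl al bl := by
  obtain pf := peel_facts hF h hmt
  obtain ⟨hln, hrn, hd, hlr⟩ := normalized_node pf.hnorm
  have hlG : BT.node cl al bl ∈ peel F := (mem_peel hmt).2 (Or.inl rfl)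
  refine minTree_eq (peel_valid hF h hmt) ?_ (mem_nls.2 ⟨hlG, by intro a h; cases h⟩) ?_
  · exact ⟨_, mem_nls.2 ⟨hlG, by intro a h; cases h⟩⟩
  · intro s hs hne
    obtain ⟨hsG, hsnl⟩ := mem_nls.1 hs
    have hnul : (BT.node cl al bl).nu < r.nu := hlr
    rcases (mem_peel hmt).1 hsG with rfl | rfl | ⟨hsF, hsne⟩
    · exact absurd rfl hne
    · exact hlr
    · exact pf.hmin s (mem_nls.2 ⟨hsF, hsnl⟩) hsne

/-- any non-leaf tree of `peel F` has valency at least that of the removed tree -/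
lemma minTree_peel_nu (hF : ForestValid n BT.pLyn F) (h : (nls F).Nonempty)
    {c : Bool} {l r : BT} (hmt : minTree F = BT.node c l r) {s : BT}
    (hs : s ∈ nls (peel F)) (hsnel : s ≠ l) : l.nu < s.nu := by
  obtain pf := peel_facts hF h hmt
  obtain ⟨hln, hrn, hd, hlr⟩ := normalized_node pf.hnorm
  obtain ⟨hsG, hsnl⟩ := mem_nls.1 hs
  rcases (mem_peel hmt).1 hsG with rfl | rfl | ⟨hsF, hsne⟩
  · exact absurd rfl hsnel
  · exact hlr
  · exact pf.hmin s (mem_nls.2 ⟨hsF, hsnl⟩) hsne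

lemma covRaw_peel (hF : ForestValid n BT.pLyn F) (h : (nls F).Nonempty)
    {c : Bool} {l r : BT} (hmt : minTree F = BT.node c l r) :
    covRaw (phiF (peel F)) (phiF F) := by
  obtain pf := peel_facts hF h hmt
  obtain ⟨hln, hrn, hd, hlr⟩ := normalized_node pf.hnorm
  have hlG : l ∈ peel F := (mem_peel hmt).2 (Or.inl rfl)
  have hrG : r ∈ peel F := (mem_peel hmt).2 (Or.inr (Or.inl rfl))
  refine ⟨(l.leaves, l.ppt), mem_phiF.2 ⟨l, hlG, rfl⟩,
    (r.leaves, r.ppt), mem_phiF.2 ⟨r, hrG, rfl⟩, ?_, (BT.node c l r).ppt, ?_, ?_⟩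
  · rw [minB_leaves, minB_leaves]; exact hlr
  · show (if c then l.ppt else r.ppt) = l.ppt ∨ (if c then l.ppt else r.ppt) = r.ppt
    cases c
    · exact Or.inr (by simp)
    · exact Or.inl (by simp)
  · have := phiF_merge (peel_valid hF h hmt) hlG hrG pf.lner c
    rw [insert_peel_eq hF h hmt] at this
    exact this

lemma labRaw_peel (hF : ForestValid n BT.pLyn F) (h : (nls F).Nonempty)
    {c : Bool} {l r : BT} (hmt : minTree F = BT.node c l r) :
    labRaw (phiF (peel F)) (phiF F) = (l.nu, r.nu, c) := by
  obtain pf := peel_facts hF h hmt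
  obtain ⟨hln, hrn, hd, hlr⟩ := normalized_node pf.hnorm
  have hGP := phiF_valid (peel_valid hF h hmt)
  have hlG : l ∈ peel F := (mem_peel hmt).2 (Or.inl rfl)
  have hrG : r ∈ peel F := (mem_peel hmt).2 (Or.inr (Or.inl rfl))
  have hphiF : phiF F = insert (l.leaves ∪ r.leaves, (BT.node c l r).ppt)
      (((phiF (peel F)).erase (l.leaves, l.ppt)).erase (r.leaves, r.ppt)) := by
    have := phiF_merge (peel_valid hF h hmt) hlG hrG pf.lner c
    rw [insert_peel_eq hF h hmt] at this
    exact this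
  have hppt : (BT.node c l r).ppt = l.ppt ∨ (BT.node c l r).ppt = r.ppt := by
    show (if c then l.ppt else r.ppt) = l.ppt ∨ (if c then l.ppt else r.ppt) = r.ppt
    cases c
    · exact Or.inr (by simp)
    · exact Or.inl (by simp)
  have := labRaw_merge ⟨hGP.1, hGP.2.1⟩ (mem_phiF.2 ⟨l, hlG, rfl⟩) (mem_phiF.2 ⟨r, hrG, rfl⟩)
    (by rw [minB_leaves, minB_leaves]; exact hlr) hppt hphiF
  rw [this, minB_leaves, minB_leaves]
  have hpptne : r.ppt ≠ l.ppt := by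
    intro he
    have h1 : r.ppt ∈ l.leaves := by rw [he]; exact ppt_mem_leaves l
    exact Finset.disjoint_left.1 hd h1 (ppt_mem_leaves r)
  cases c
  · rw [if_neg]
    show ¬ (if false = true then l.ppt else r.ppt) = l.ppt
    simpa using hpptne
  · rw [if_pos]
    show (if true = true then l.ppt else r.ppt) = l.ppt
    simp

lemma junction (hF : ForestValid n BT.pLyn F) (h : (nls F).Nonempty)
    {c : Bool} {l r : BT} (hmt : minTree F = BT.node c l r) :
    ∀ x ∈ (forestWord (peel F)).getLast?, ¬ ltLp x (l.nu, r.nu, c) := by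
  obtain pf := peel_facts hF h hmt
  obtain ⟨hln, hrn, hd, hlr⟩ := normalized_node pf.hnorm
  intro x hx
  have hwne : forestWord (peel F) ≠ [] := by
    intro hnil; rw [hnil] at hx; simp at hx
  have hneG : (nls (peel F)).Nonempty := forestWord_ne_nil_nls hwne
  obtain ⟨cG, lG, rG, hmtG⟩ := minTree_node hneG
  have hlast : (forestWord (peel F)).getLast? = some (lG.nu, rG.nu, cG) := by
    rw [forestWord_peel (peel_valid hF h hmt) hneG hmtG]
    exact List.getLast?_concat
  rw [hlast] at hx
  simp only [Option.mem_def, Option.some.injEq] at hx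
  subst hx
  -- facts about the minimal non-leaf tree of `peel F`
  cases hl : l with
  | leaf a =>
      -- every non-leaf tree of `peel F` has larger valency
      subst hl
      have hmem : BT.node cG lG rG ∈ nls (peel F) := hmtG ▸ (minTree_spec hneG).1
      have hne : BT.node cG lG rG ≠ BT.leaf a := by intro hcon; cases hcon
      have hlt : (BT.leaf a).nu < (BT.node cG lG rG).nu :=
        minTree_peel_nu hF h hmt hmem hne
      have hnorm : (BT.node cG lG rG).normalized :=
        ((peel_valid hF h hmt).1 _ (mem_nls.1 hmem).1).1
      obtain ⟨-, -, -, hGrl⟩ := normalized_node hnorm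
      rw [nu_node cG lG rG hGrl] at hlt
      rintro (hcon | ⟨hcon, -⟩)
      · simp only at hcon; omega
      · simp only at hcon; omega
  | node cl al bl =>
      subst hl
      have hmtG' : minTree (peel F) = BT.node cl al bl := minTree_peel_left hF h hmt
      rw [hmtG', BT.node.injEq] at hmtG
      obtain ⟨rfl, rfl, rfl⟩ := hmtG
      obtain ⟨-, -, -, hablt⟩ := normalized_node hln
      have hlnu : (BT.node cl al bl).nu = al.nu := nu_node _ _ _ hablt
      have hply : c ≤ cl ∧ ((cl = c ∧ c = true) → r.nu < bl.nu) := pf.hplyn.2.2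
      rintro (hcon | ⟨-, (⟨hc1, hc2⟩ | ⟨hc1, hc2, hc3⟩)⟩)
      · simp only at hcon
        rw [hlnu] at hcon
        omega
      · simp only at hc1 hc2
        rw [hc1, hc2] at hply
        exact absurd hply.1 (by decide)
      · simp only at hc1 hc2 hc3
        have := hply.2 ⟨by rw [hc1, hc2], hc2⟩
        omega

lemma forward : ∀ (k : ℕ) (F : Finset BT), ForestValid n BT.pLyn F → rkForest F ≤ k →
    (∀ G ∈ fchain k F, ForestValid n BT.pLyn G) ∧
    (fchain k F).head? = some (botForest n) ∧
    (fchain k F).getLast? = some F ∧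
    List.Chain' (fun G G' => covRaw (phiF G) (phiF G')) (fchain k F) ∧
    wordOf labRaw ((fchain k F).map phiF) = forestWord F ∧
    AscFree ltLp (forestWord F) := by
  intro k
  induction k with
  | zero =>
      intro F hF hrk
      have h0 : nls F = ∅ := nls_empty_iff.2 (Nat.le_zero.1 hrk)
      have hnil : forestWord F = [] := nls_not_empty_forestWord h0
      have hbot : F = botForest n := eq_botForest hF h0
      refine ⟨?_, ?_, ?_, ?_, ?_, ?_⟩
      · intro G hG
        simp only [fchain, List.mem_singleton] at hG
        subst hG; exact hF
      · show [F].head? = _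
        rw [hbot]; rfl
      · rfl
      · exact List.isChain_singleton F
      · show wordOf labRaw [phiF F] = _
        rw [hnil]; rfl
      · rw [hnil]; exact List.isChain_nil
  | succ k ih =>
      intro F hF hrk
      by_cases hne : (nls F).Nonempty
      · obtain ⟨c, l, r, hmt⟩ := minTree_node hne
        obtain pf := peel_facts hF hne hmt
        have hGv := peel_valid hF hne hmt
        have hrkG : rkForest (peel F) ≤ k := by
          have := rk_peel hF hne hmt
          omega
        obtain ⟨ih1, ih2, ih3, ih4, ih5, ih6⟩ := ih (peel F) hGv hrkG
        have hch : fchain (k+1) F = fchain k (peel F) ++ [F] := by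
          rw [fchain, if_pos hne]
        have hAne : fchain k (peel F) ≠ [] := by
          intro hcon; rw [hcon] at ih3; simp at ih3
        have hfw : forestWord F = forestWord (peel F) ++ [(l.nu, r.nu, c)] :=
          forestWord_peel hF hne hmt
        have hasc : AscFree ltLp (forestWord F) := by
          rw [hfw]
          refine List.isChain_append.2 ⟨ih6, List.isChain_singleton _, ?_⟩
          intro x hx y hy
          simp only [List.head?_cons, Option.mem_def, Option.some.injEq] at hy
          subst hy
          exact junction hF hne hmt x hx
        refine ⟨?_, ?_, ?_, ?_, ?_, hasc⟩
        · intro G hG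
          rw [hch] at hG
          rcases List.mem_append.1 hG with hG | hG
          · exact ih1 G hG
          · simp only [List.mem_singleton] at hG; subst hG; exact hF
        · rw [hch]
          cases hA : fchain k (peel F) with
          | nil => exact absurd hA hAne
          | cons a t => rw [hA] at ih2; simpa using ih2
        · rw [hch, List.getLast?_concat]
        · rw [hch]
          refine List.isChain_append.2 ⟨ih4, List.isChain_singleton _, ?_⟩
          intro x hx y hy
          rw [ih3] at hx
          simp only [Option.mem_def, Option.some.injEq] at hx hy
          subst hx
          simp only [List.head?_cons, Option.some.injEq] at hy
          subst hy
          exact covRaw_peel hF hne hmt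
        · rw [hch, List.map_append]
          have hlastmap : ((fchain k (peel F)).map phiF).getLast? = some (phiF (peel F)) := by
            rw [List.getLast?_map, ih3]
            rfl
          rw [show (([F].map phiF) : List (Finset (Finset ℕ × ℕ))) = [phiF F] from rfl,
            wordOf_append labRaw _ _ _ hlastmap, ih5, labRaw_peel hF hne hmt, hfw]
      · rw [Finset.not_nonempty_iff_eq_empty] at hne
        have hnil : forestWord F = [] := nls_not_empty_forestWord hne
        have hbot : F = botForest n := eq_botForest hF hne
        have hch : fchain (k+1) F = [F] := by
          rw [fchain, if_neg (by rw [hne]; simp)]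
        refine ⟨?_, ?_, ?_, ?_, ?_, ?_⟩
        · intro G hG
          rw [hch] at hG
          simp only [List.mem_singleton] at hG
          subst hG; exact hF
        · rw [hch]
          show [F].head? = _
          rw [hbot]; rfl
        · rw [hch]; rfl
        · rw [hch]; exact List.isChain_singleton F
        · rw [hch]
          show wordOf labRaw [phiF F] = _
          rw [hnil]; rfl
        · rw [hnil]; exact List.isChain_nil

end Forward

end PLaux

namespace PLaux

section MergeForest

variable {n : ℕ} {F' : Finset BT} {t1 t2 : BT} {u : Bool}

lemma rk_botForest : rkForest (botForest n) = 0 := by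
  apply Finset.sum_eq_zero
  intro t ht
  obtain ⟨i, -, rfl⟩ := Finset.mem_image.1 ht
  rfl

lemma phiF_bot : phiF (botForest n) = (botPP (Finset.Icc 1 n)).1 := by
  show (((Finset.Icc 1 n).image BT.leaf).image fun t => (t.leaves, t.ppt)) = _
  rw [Finset.image_image]
  rfl

lemma fchain_length : ∀ (k : ℕ) (F : Finset BT), ForestValid n BT.pLyn F → rkForest F ≤ k →
    (fchain k F).length = rkForest F + 1 := by
  intro k
  induction k with
  | zero =>
      intro F hF hrk
      rw [Nat.le_zero.1 hrk]
      rfl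
  | succ k ih =>
      intro F hF hrk
      by_cases hne : (nls F).Nonempty
      · obtain ⟨c, l, r, hmt⟩ := minTree_node hne
        have hrkp := rk_peel hF hne hmt
        rw [fchain, if_pos hne, List.length_append,
          ih (peel F) (peel_valid hF hne hmt) (by omega)]
        simp only [List.length_singleton]
        omega
      · rw [Finset.not_nonempty_iff_eq_empty] at hne
        rw [fchain, if_neg (by rw [hne]; simp), nls_empty_iff.1 hne]
        rfl

variable (hF' : ForestValid n BT.pLyn F') (ht1 : t1 ∈ F') (ht2 : t2 ∈ F')
  (hne : t1 ≠ t2) (hnu : t1.nu < t2.nu)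

include hF' ht1 ht2 hne hnu in
lemma node_normalized : (BT.node u t1 t2).normalized :=
  ⟨(hF'.1 t1 ht1).1, (hF'.1 t2 ht2).1, hF'.2.1 t1 ht1 t2 ht2 hne, hnu⟩

include hF' ht1 ht2 hne hnu in
lemma node_not_mem : BT.node u t1 t2 ∉ F' := by
  intro hT
  have hTne : BT.node u t1 t2 ≠ t1 := by
    have := child_ne_node u t1 t2 (hF'.2.1 t1 ht1 t2 ht2 hne)
    exact fun h => this.1 h.symm
  have hd := hF'.2.1 _ hT t1 ht1 hTne
  obtain ⟨x, hx⟩ := leaves_nonempty t1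
  exact Finset.disjoint_left.1 hd (by rw [leaves_node]; exact Finset.mem_union_left _ hx) hx

include hF' ht1 ht2 hne hnu in
lemma merge_valid (hpl : (BT.node u t1 t2).pLyn) :
    ForestValid n BT.pLyn (insert (BT.node u t1 t2) ((F'.erase t1).erase t2)) := by
  have hnorm := node_normalized hF' ht1 ht2 hne hnu (u := u)
  have memiff : ∀ s, s ∈ insert (BT.node u t1 t2) ((F'.erase t1).erase t2) ↔
      s = BT.node u t1 t2 ∨ (s ∈ F' ∧ s ≠ t1 ∧ s ≠ t2) := by
    intro s
    simp only [Finset.mem_insert, Finset.mem_erase]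
    tauto
  refine ⟨?_, ?_, ?_⟩
  · intro t ht
    rcases (memiff t).1 ht with rfl | ⟨htF, -, -⟩
    · exact ⟨hnorm, hpl⟩
    · exact hF'.1 t htF
  · intro a ha b hb hab
    have hTd : ∀ s ∈ F', s ≠ t1 → s ≠ t2 → Disjoint (BT.node u t1 t2).leaves s.leaves := by
      intro s hs hs1 hs2
      rw [leaves_node]
      exact Finset.disjoint_union_left.2
        ⟨hF'.2.1 t1 ht1 s hs (Ne.symm hs1), hF'.2.1 t2 ht2 s hs (Ne.symm hs2)⟩
    rcases (memiff a).1 ha with rfl | ⟨haF, ha1, ha2⟩ <;>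
      rcases (memiff b).1 hb with rfl | ⟨hbF, hb1, hb2⟩
    · exact absurd rfl hab
    · exact hTd b hbF hb1 hb2
    · exact (hTd a haF ha1 ha2).symm
    · exact hF'.2.1 a haF b hbF hab
  · ext x
    rw [← hF'.2.2]
    simp only [Finset.mem_biUnion]
    constructor
    · rintro ⟨s, hs, hx⟩
      rcases (memiff s).1 hs with rfl | ⟨hsF, -, -⟩
      · rw [leaves_node] at hx
        rcases Finset.mem_union.1 hx with hx | hx
        · exact ⟨t1, ht1, hx⟩
        · exact ⟨t2, ht2, hx⟩
      · exact ⟨s, hsF, hx⟩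
    · rintro ⟨s, hs, hx⟩
      by_cases hs1 : s = t1
      · exact ⟨BT.node u t1 t2, (memiff _).2 (Or.inl rfl),
          by rw [leaves_node]; exact Finset.mem_union_left _ (hs1 ▸ hx)⟩
      · by_cases hs2 : s = t2
        · exact ⟨BT.node u t1 t2, (memiff _).2 (Or.inl rfl),
            by rw [leaves_node]; exact Finset.mem_union_right _ (hs2 ▸ hx)⟩
        · exact ⟨s, (memiff _).2 (Or.inr ⟨hs, hs1, hs2⟩), hx⟩

include hF' ht1 ht2 hne hnu in
lemma rk_merge : rkForest (insert (BT.node u t1 t2) ((F'.erase t1).erase t2)) =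
    rkForest F' + 1 := by
  have hTnot : BT.node u t1 t2 ∉ (F'.erase t1).erase t2 := fun h =>
    node_not_mem hF' ht1 ht2 hne hnu (Finset.mem_of_mem_erase (Finset.mem_of_mem_erase h))
  have ht2e : t2 ∈ F'.erase t1 := Finset.mem_erase.2 ⟨Ne.symm hne, ht2⟩
  have e1 : rkForest F' = t1.internals + (F'.erase t1).sum BT.internals := by
    rw [rkForest, Finset.add_sum_erase _ _ ht1]
  have e2 : (F'.erase t1).sum BT.internals =
      t2.internals + ((F'.erase t1).erase t2).sum BT.internals := by
    rw [Finset.add_sum_erase _ _ ht2e]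
  have e3 : rkForest (insert (BT.node u t1 t2) ((F'.erase t1).erase t2)) =
      (BT.node u t1 t2).internals + ((F'.erase t1).erase t2).sum BT.internals := by
    rw [rkForest, Finset.sum_insert hTnot]
  rw [e3, show (BT.node u t1 t2).internals = t1.internals + t2.internals + 1 from rfl]
  omega

include hF' ht1 ht2 hne hnu in
lemma minTree_merge (hpl : (BT.node u t1 t2).pLyn)
    (hmin : ∀ s ∈ nls F', s ≠ t1 → t1.nu < s.nu) :
    minTree (insert (BT.node u t1 t2) ((F'.erase t1).erase t2)) = BT.node u t1 t2 := by
  have hFv := merge_valid hF' ht1 ht2 hne hnu hpl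
  have hTmem : BT.node u t1 t2 ∈ insert (BT.node u t1 t2) ((F'.erase t1).erase t2) :=
    Finset.mem_insert_self _ _
  have hTnls : BT.node u t1 t2 ∈ nls (insert (BT.node u t1 t2) ((F'.erase t1).erase t2)) :=
    mem_nls.2 ⟨hTmem, by intro a h; cases h⟩
  refine minTree_eq hFv ⟨_, hTnls⟩ hTnls ?_
  intro s hs hsne
  obtain ⟨hsmem, hsnl⟩ := mem_nls.1 hs
  rcases Finset.mem_insert.1 hsmem with rfl | hsmem'
  · exact absurd rfl hsne
  · have hsF : s ∈ F' := Finset.mem_of_mem_erase (Finset.mem_of_mem_erase hsmem')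
    have hs2 : s ≠ t2 := Finset.ne_of_mem_erase hsmem'
    have hs1 : s ≠ t1 := Finset.ne_of_mem_erase (Finset.mem_of_mem_erase hsmem')
    have := hmin s (mem_nls.2 ⟨hsF, hsnl⟩) hs1
    rw [nu_node u t1 t2 hnu]
    exact this

include hF' ht1 ht2 hne hnu in
lemma peel_merge (hpl : (BT.node u t1 t2).pLyn)
    (hmin : ∀ s ∈ nls F', s ≠ t1 → t1.nu < s.nu) :
    peel (insert (BT.node u t1 t2) ((F'.erase t1).erase t2)) = F' := by
  have hmt := minTree_merge hF' ht1 ht2 hne hnu hpl hmin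
  have hTnot : BT.node u t1 t2 ∉ (F'.erase t1).erase t2 := fun h =>
    node_not_mem hF' ht1 ht2 hne hnu (Finset.mem_of_mem_erase (Finset.mem_of_mem_erase h))
  have ht2e : t2 ∈ F'.erase t1 := Finset.mem_erase.2 ⟨Ne.symm hne, ht2⟩
  rw [peel_eq hmt, Finset.erase_insert hTnot, Finset.insert_erase ht2e,
    Finset.insert_erase ht1]

end MergeForest

end PLaux

namespace PLaux

section ChainOf

variable {n : ℕ}

/-- the saturated chain associated to a pointed Lyndon forest -/
noncomputable def chainOf (F : FLynP n) : List (PPart (Finset.Icc 1 n)) :=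
  (fchain (rkForest F.1) F.1).pmap
    (fun G hG => (⟨phiF G, phiF_valid hG⟩ : PPart (Finset.Icc 1 n)))
    (forward (rkForest F.1) F.1 F.2 le_rfl).1

lemma chainOf_map_val (F : FLynP n) :
    (chainOf F).map Subtype.val = (fchain (rkForest F.1) F.1).map phiF := by
  rw [chainOf, List.map_pmap]
  exact List.pmap_eq_map _

lemma option_val_inj {α : Type*} {p : α → Prop} {o : Option {x // p x}} {x : {x // p x}}
    (h : o.map Subtype.val = some x.val) : o = some x := by
  cases o with
  | none => simp at h
  | some a =>
      simp only [Option.map_some, Option.some.injEq] at h ⊢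
      exact Subtype.ext h

lemma chainOf_head (F : FLynP n) : (chainOf F).head? = some (botPP (Finset.Icc 1 n)) := by
  apply option_val_inj
  rw [← List.head?_map, chainOf_map_val, List.head?_map,
    (forward (rkForest F.1) F.1 F.2 le_rfl).2.1]
  rw [Option.map_some]
  rw [phiF_bot]

lemma chainOf_getLast (F : FLynP n) :
    (chainOf F).getLast? = some (⟨phiF F.1, phiF_valid F.2⟩ : PPart (Finset.Icc 1 n)) := by
  apply option_val_inj
  rw [← List.getLast?_map, chainOf_map_val, List.getLast?_map,
    (forward (rkForest F.1) F.1 F.2 le_rfl).2.2.1]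
  rfl

lemma chainOf_chain (F : FLynP n) : (chainOf F).Chain' covPP := by
  have h1 := (forward (rkForest F.1) F.1 F.2 le_rfl).2.2.2.1
  unfold List.Chain' at h1 ⊢
  rw [← List.isChain_map (f := phiF)] at h1
  rw [← chainOf_map_val, List.isChain_map] at h1
  exact h1

lemma chainOf_word (F : FLynP n) : wordOf labPP (chainOf F) = forestWord F.1 := by
  have h1 := (forward (rkForest F.1) F.1 F.2 le_rfl).2.2.2.2.1
  rw [← chainOf_map_val, wordOf_map] at h1
  exact h1

lemma chainOf_ascfree (F : FLynP n) : AscFree ltLp (wordOf labPP (chainOf F)) := by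
  rw [chainOf_word]
  exact (forward (rkForest F.1) F.1 F.2 le_rfl).2.2.2.2.2

/-- the forward map, into ascent-free saturated chains from the minimum -/
noncomputable def fMap (F : FLynP n) :
    {c : List (PPart (Finset.Icc 1 n)) //
      c.head? = some (botPP (Finset.Icc 1 n)) ∧ c.Chain' covPP ∧
      AscFree ltLp (wordOf labPP c)} :=
  ⟨chainOf F, chainOf_head F, chainOf_chain F, chainOf_ascfree F⟩

end ChainOf

section Injectivity

variable {n : ℕ}

lemma inj_aux : ∀ (m : ℕ) (F1 F2 : Finset BT), ForestValid n BT.pLyn F1 →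
    ForestValid n BT.pLyn F2 → rkForest F1 = m → rkForest F2 = m →
    (fchain m F1).map phiF = (fchain m F2).map phiF → F1 = F2 := by
  intro m
  induction m with
  | zero =>
      intro F1 F2 h1 h2 hr1 hr2 _
      rw [eq_botForest h1 (nls_empty_iff.2 hr1), eq_botForest h2 (nls_empty_iff.2 hr2)]
  | succ m ih =>
      intro F1 F2 h1 h2 hr1 hr2 hmap
      have hne1 : (nls F1).Nonempty := by
        rw [Finset.nonempty_iff_ne_empty]
        intro hc
        rw [nls_empty_iff.1 hc] at hr1
        omega
      have hne2 : (nls F2).Nonempty := by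
        rw [Finset.nonempty_iff_ne_empty]
        intro hc
        rw [nls_empty_iff.1 hc] at hr2
        omega
      obtain ⟨c1, l1, r1, hmt1⟩ := minTree_node hne1
      obtain ⟨c2, l2, r2, hmt2⟩ := minTree_node hne2
      obtain pf1 := peel_facts h1 hne1 hmt1
      obtain pf2 := peel_facts h2 hne2 hmt2
      obtain ⟨hln1, hrn1, hd1, hlr1⟩ := normalized_node pf1.hnorm
      obtain ⟨hln2, hrn2, hd2, hlr2⟩ := normalized_node pf2.hnorm
      have hG1v := peel_valid h1 hne1 hmt1
      have hG2v := peel_valid h2 hne2 hmt2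
      rw [fchain, if_pos hne1, fchain, if_pos hne2, List.map_append, List.map_append] at hmap
      obtain ⟨hpre, hsuf⟩ := List.append_inj' hmap rfl
      have hphi : phiF F1 = phiF F2 := by
        simp only [List.map_cons, List.map_nil, List.cons.injEq] at hsuf
        exact hsuf.1
      have hrp1 : rkForest (peel F1) = m := by have := rk_peel h1 hne1 hmt1; omega
      have hrp2 : rkForest (peel F2) = m := by have := rk_peel h2 hne2 hmt2; omega
      have hG : peel F1 = peel F2 := ih (peel F1) (peel F2) hG1v hG2v hrp1 hrp2 hpre
      -- the merged blocks agree
      have hl1G : l1 ∈ peel F1 := (mem_peel hmt1).2 (Or.inl rfl)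
      have hr1G : r1 ∈ peel F1 := (mem_peel hmt1).2 (Or.inr (Or.inl rfl))
      have hl2G : l2 ∈ peel F2 := (mem_peel hmt2).2 (Or.inl rfl)
      have hr2G : r2 ∈ peel F2 := (mem_peel hmt2).2 (Or.inr (Or.inl rfl))
      have hnews : ∀ (F : Finset BT) (hF : ForestValid n BT.pLyn F)
          (hne : (nls F).Nonempty) (c : Bool) (l r : BT) (hmt : minTree F = BT.node c l r),
          phiF F \ phiF (peel F) = {(l.leaves ∪ r.leaves, (BT.node c l r).ppt)} := by
        intro F hF hne c l r hmt
        obtain pf := peel_facts hF hne hmt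
        have hGv := peel_valid hF hne hmt
        have hGP := phiF_valid hGv
        have hlG : l ∈ peel F := (mem_peel hmt).2 (Or.inl rfl)
        have hrG : r ∈ peel F := (mem_peel hmt).2 (Or.inr (Or.inl rfl))
        have hphiF : phiF F = insert (l.leaves ∪ r.leaves, (BT.node c l r).ppt)
            (((phiF (peel F)).erase (l.leaves, l.ppt)).erase (r.leaves, r.ppt)) := by
          have := phiF_merge hGv hlG hrG pf.lner c
          rw [insert_peel_eq hF hne hmt] at this
          exact this
        have hbne : ((l.leaves, l.ppt) : Finset ℕ × ℕ) ≠ (r.leaves, r.ppt) := by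
          intro hc
          exact leaves_ne_of_forest hGv hlG hrG pf.lner (congrArg Prod.fst hc)
        exact (merge_setup ⟨hGP.1, hGP.2.1⟩ (mem_phiF.2 ⟨l, hlG, rfl⟩)
          (mem_phiF.2 ⟨r, hrG, rfl⟩) hbne hphiF).2
      have hsing : ({(l1.leaves ∪ r1.leaves, (BT.node c1 l1 r1).ppt)} : Finset (Finset ℕ × ℕ))
          = {(l2.leaves ∪ r2.leaves, (BT.node c2 l2 r2).ppt)} := by
        rw [← hnews F1 h1 hne1 c1 l1 r1 hmt1, ← hnews F2 h2 hne2 c2 l2 r2 hmt2, hphi, hG]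
      rw [Finset.singleton_inj, Prod.mk.injEq] at hsing
      obtain ⟨hBeq, hpteq⟩ := hsing
      -- identify the children
      have hchild : ∀ s ∈ peel F1, s.leaves ⊆ l1.leaves ∪ r1.leaves → s = l1 ∨ s = r1 := by
        intro s hs hsub
        rcases (mem_peel hmt1).1 hs with rfl | rfl | ⟨hsF, hsne⟩
        · exact Or.inl rfl
        · exact Or.inr rfl
        · exfalso
          have hd := h1.2.1 s hsF _ pf1.tmem hsne
          obtain ⟨x, hx⟩ := leaves_nonempty s
          exact Finset.disjoint_left.1 hd hx (by rw [leaves_node]; exact hsub hx)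
      have hsub2l : l2.leaves ⊆ l1.leaves ∪ r1.leaves := by
        rw [hBeq]; exact Finset.subset_union_left
      have hsub2r : r2.leaves ⊆ l1.leaves ∪ r1.leaves := by
        rw [hBeq]; exact Finset.subset_union_right
      have hl2' : l2 = l1 ∨ l2 = r1 := hchild l2 (hG ▸ hl2G) hsub2l
      have hr2' : r2 = l1 ∨ r2 = r1 := hchild r2 (hG ▸ hr2G) hsub2r
      have hl2ner2 : l2 ≠ r2 := by intro hc; rw [hc] at hlr2; omega
      have hleq : l2 = l1 ∧ r2 = r1 := by
        rcases hl2' with rfl | rfl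
        · rcases hr2' with rfl | rfl
          · exact absurd rfl hl2ner2
          · exact ⟨rfl, rfl⟩
        · rcases hr2' with rfl | rfl
          · omega
          · exact absurd rfl hl2ner2
      obtain ⟨rfl, rfl⟩ := hleq
      -- identify the colors
      have hceq : c1 = c2 := by
        have hpptne : l2.ppt ≠ r2.ppt := by
          intro he
          have h1' : l2.ppt ∈ r2.leaves := by rw [he]; exact ppt_mem_leaves r2
          exact Finset.disjoint_left.1 hd1 (ppt_mem_leaves l2) h1'
        have e1 : (BT.node c1 l2 r2).ppt = if c1 then l2.ppt else r2.ppt := rfl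
        have e2 : (BT.node c2 l2 r2).ppt = if c2 then l2.ppt else r2.ppt := rfl
        rw [e1, e2] at hpteq
        cases c1 <;> cases c2
        · rfl
        · simp only [if_true, if_false] at hpteq; exact absurd hpteq.symm hpptne
        · simp only [if_true, if_false] at hpteq; exact absurd hpteq hpptne
        · rfl
      subst hceq
      rw [← insert_peel_eq h1 hne1 hmt1, ← insert_peel_eq h2 hne2 hmt2, hG]

lemma fMap_injective : Function.Injective (fMap (n := n)) := by
  intro F1 F2 he
  have hc : chainOf F1 = chainOf F2 := congrArg Subtype.val he
  have hmap : (fchain (rkForest F1.1) F1.1).map phiF =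
      (fchain (rkForest F2.1) F2.1).map phiF := by
    rw [← chainOf_map_val, ← chainOf_map_val, hc]
  have hlen : rkForest F1.1 = rkForest F2.1 := by
    have h1 := fchain_length (rkForest F1.1) F1.1 F1.2 le_rfl
    have h2 := fchain_length (rkForest F2.1) F2.1 F2.2 le_rfl
    have := congrArg List.length hmap
    simp only [List.length_map] at this
    omega
  rw [hlen] at hmap
  exact Subtype.ext (inj_aux (rkForest F2.1) F1.1 F2.1 F1.2 F2.2 hlen rfl hmap)

end Injectivity

end PLaux

namespace PLaux

section Surjectivity

variable {n : ℕ}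

lemma forestWord_ne_nil {F : Finset BT} (hF : ForestValid n BT.pLyn F)
    (h : (nls F).Nonempty) : forestWord F ≠ [] := by
  obtain ⟨c, l, r, hmt⟩ := minTree_node h
  rw [forestWord_peel hF h hmt]
  simp

lemma forestWord_getLast {F : Finset BT} (hF : ForestValid n BT.pLyn F)
    (h : (nls F).Nonempty) {c : Bool} {l r : BT} (hmt : minTree F = BT.node c l r) :
    (forestWord F).getLast? = some (l.nu, r.nu, c) := by
  rw [forestWord_peel hF h hmt]
  exact List.getLast?_concat

lemma chainOf_bot : chainOf (botFP n) = [botPP (Finset.Icc 1 n)] := by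
  apply List.map_injective_iff.2 Subtype.val_injective
  rw [chainOf_map_val]
  have h0 : rkForest (botFP n).1 = 0 := rk_botForest
  rw [h0]
  show [phiF (botForest n)] = [(botPP (Finset.Icc 1 n)).1]
  rw [phiF_bot]

lemma surj_aux : ∀ c : List (PPart (Finset.Icc 1 n)),
    c.head? = some (botPP (Finset.Icc 1 n)) → c.Chain' covPP →
    AscFree ltLp (wordOf labPP c) → ∃ F : FLynP n, chainOf F = c := by
  intro c
  induction c using List.reverseRecOn with
  | nil => intro h _ _; simp at h
  | append_singleton d y ih =>
      intro hhead hchain hasc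
      rcases eq_or_ne d [] with rfl | hdne
      · simp only [List.nil_append, List.head?_cons, Option.some.injEq] at hhead
        subst hhead
        exact ⟨botFP n, chainOf_bot⟩
      · obtain ⟨x0, hx0⟩ : ∃ x, d.getLast? = some x :=
          Option.isSome_iff_exists.1 (List.getLast?_isSome.2 hdne)
        have hdhead : d.head? = some (botPP (Finset.Icc 1 n)) := by
          rw [← List.head?_append_of_ne_nil d (l₂ := [y]) hdne]
          exact hhead
        have hchain' : d.Chain' covPP := (List.isChain_append.1 hchain).1
        have hword : wordOf labPP (d ++ [y]) = wordOf labPP d ++ [labPP x0 y] :=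
          wordOf_append _ _ _ _ hx0
        rw [hword] at hasc
        have hasc' : AscFree ltLp (wordOf labPP d) := (List.isChain_append.1 hasc).1
        obtain ⟨F', hF'⟩ := ih hdhead hchain' hasc'
        have hF'v : ForestValid n BT.pLyn F'.1 := F'.2
        have hx0' : x0 = (⟨phiF F'.1, phiF_valid F'.2⟩ : PPart (Finset.Icc 1 n)) := by
          rw [← hF', chainOf_getLast] at hx0
          exact (Option.some.inj hx0).symm
        have hcov : covPP x0 y := by
          have := (List.isChain_append.1 hchain).2.2
          exact this x0 (by rw [hx0]; rfl) y rfl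
        rw [covPP_iff_covRaw, hx0'] at hcov
        obtain ⟨b1, hb1, b2, hb2, hmin, p, hp, hy⟩ := hcov
        obtain ⟨t1, ht1, rfl⟩ := mem_phiF.1 hb1
        obtain ⟨t2, ht2, rfl⟩ := mem_phiF.1 hb2
        have hnu : t1.nu < t2.nu := by
          rw [show ((t1.leaves, t1.ppt) : Finset ℕ × ℕ).1 = t1.leaves from rfl,
            show ((t2.leaves, t2.ppt) : Finset ℕ × ℕ).1 = t2.leaves from rfl,
            minB_leaves, minB_leaves] at hmin
          exact hmin
        have ht12 : t1 ≠ t2 := by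
          intro h; rw [h] at hnu; omega
        have hdisj12 : Disjoint t1.leaves t2.leaves := hF'v.2.1 t1 ht1 t2 ht2 ht12
        have hpt12 : t1.ppt ≠ t2.ppt := by
          intro he
          have h1 : t1.ppt ∈ t2.leaves := by rw [he]; exact ppt_mem_leaves t2
          exact Finset.disjoint_left.1 hdisj12 (ppt_mem_leaves t1) h1
        set u : Bool := if p = t1.ppt then true else false with hu
        have hpptT : (BT.node u t1 t2).ppt = p := by
          show (if u then t1.ppt else t2.ppt) = p
          by_cases hc : p = t1.ppt
          · rw [hu, if_pos hc, if_pos rfl, hc]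
          · rcases hp with h | h
            · exact absurd h hc
            · rw [hu, if_neg hc, if_neg (by simp [hc]), h]
        have hwd : wordOf labPP d = forestWord F'.1 := by rw [← hF', chainOf_word]
        have hlab : labPP x0 y = (t1.nu, t2.nu, u) := by
          rw [labPP_eq_labRaw, hx0']
          have := labRaw_merge (s := phiF F'.1) ⟨(phiF_valid hF'v).1, (phiF_valid hF'v).2.1⟩
            hb1 hb2 hmin hp hy
          rw [show ((t1.leaves, t1.ppt) : Finset ℕ × ℕ).1 = t1.leaves from rfl,
            show ((t2.leaves, t2.ppt) : Finset ℕ × ℕ).1 = t2.leaves from rfl,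
            minB_leaves, minB_leaves] at this
          exact this
        have hjun0 := (List.isChain_append.1 hasc).2.2
        -- pLyn at the new root and minimality of t1 among non-leaf trees
        have hkey : (∀ s ∈ nls F'.1, s ≠ t1 → t1.nu < s.nu) ∧ (BT.node u t1 t2).pLyn := by
          by_cases hNE : (nls F'.1).Nonempty
          · obtain ⟨cG, lG, rG, hmtG⟩ := minTree_node hNE
            have hlastw : (wordOf labPP d).getLast? = some (lG.nu, rG.nu, cG) := by
              rw [hwd]; exact forestWord_getLast hF'v hNE hmtG
            have hjun : ¬ ltLp (lG.nu, rG.nu, cG) (t1.nu, t2.nu, u) := by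
              have := hjun0 _ (by rw [hlastw]; rfl) (labPP x0 y) rfl
              rw [hlab] at this
              exact this
            have hGmem : BT.node cG lG rG ∈ F'.1 :=
              (mem_nls.1 (hmtG ▸ (minTree_spec hNE).1)).1
            have hGnorm := ((hF'v.1 _ hGmem).1 : (BT.node cG lG rG).normalized)
            obtain ⟨-, -, -, hGlt⟩ := normalized_node hGnorm
            have hGnu : (BT.node cG lG rG).nu = lG.nu := nu_node _ _ _ hGlt
            have hle : t1.nu ≤ lG.nu := by
              by_contra hc
              exact hjun (Or.inl (by simp only; omega))
            have hminT : ∀ s ∈ nls F'.1, s ≠ t1 → t1.nu < s.nu := by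
              intro s hs hsne
              have h1 := (minTree_spec hNE).2 s hs
              rw [hmtG, hGnu] at h1
              have h2 : s.nu ≠ t1.nu :=
                nu_inj_of_forest hF'v (mem_nls.1 hs).1 ht1 hsne
              omega
            refine ⟨hminT, ?_⟩
            cases ht1e : t1 with
            | leaf a => exact ⟨trivial, (hF'v.1 t2 ht2).2, trivial⟩
            | node c1' a' b' =>
                subst ht1e
                have ht1nls : BT.node c1' a' b' ∈ nls F'.1 :=
                  mem_nls.2 ⟨ht1, by intro a h; cases h⟩
                have hge := (minTree_spec hNE).2 _ ht1nls
                rw [hmtG, hGnu] at hge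
                have hmteq : minTree F'.1 = BT.node c1' a' b' := by
                  have : BT.node cG lG rG = BT.node c1' a' b' := by
                    by_contra hc
                    have := nu_inj_of_forest hF'v hGmem ht1 hc
                    rw [hGnu] at this
                    have h3 : (BT.node c1' a' b').nu = lG.nu := by omega
                    exact this h3.symm
                  rw [hmtG, this]
                rw [hmteq, BT.node.injEq] at hmtG
                obtain ⟨rfl, rfl, rfl⟩ := hmtG
                obtain ⟨h1n, h2n, h12d, hab⟩ := normalized_node ((hF'v.1 _ ht1).1)
                have ht1nu : (BT.node c1' a' b').nu = a'.nu := nu_node _ _ _ hab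
                refine ⟨(hF'v.1 _ ht1).2, (hF'v.1 t2 ht2).2, ?_, ?_⟩
                · -- u ≤ c1'
                  cases hue : u with
                  | false => exact Bool.false_le _
                  | true =>
                      cases hce : c1' with
                      | false =>
                          exfalso
                          apply hjun
                          refine Or.inr ⟨by simp only; omega, Or.inl ⟨hce, hue⟩⟩
                      | true => exact le_refl _
                · rintro ⟨hce, hue⟩
                  have hc1 : c1' = true := hce.trans hue
                  have hnlt : ¬ b'.nu < t2.nu := by
                    intro hc
                    apply hjun
                    exact Or.inr ⟨by simp only; omega, Or.inr ⟨hc1, hue, hc⟩⟩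
                  have hne' : t2.nu ≠ b'.nu := by
                    intro he
                    have hb'mem : b'.nu ∈ (BT.node c1' a' b').leaves := by
                      rw [leaves_node]
                      exact Finset.mem_union_right _ (nu_mem_leaves b')
                    rw [← he] at hb'mem
                    exact Finset.disjoint_left.1 hdisj12 hb'mem (nu_mem_leaves t2)
                  omega
          · rw [Finset.not_nonempty_iff_eq_empty] at hNE
            have hminT : ∀ s ∈ nls F'.1, s ≠ t1 → t1.nu < s.nu := by
              intro s hs
              rw [hNE] at hs
              simp at hs
            refine ⟨hminT, ?_⟩
            cases ht1e : t1 with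
            | leaf a => exact ⟨trivial, (hF'v.1 t2 ht2).2, trivial⟩
            | node c1' a' b' =>
                exfalso
                have : t1 ∈ nls F'.1 := mem_nls.2 ⟨ht1, by rw [ht1e]; intro a h; cases h⟩
                rw [hNE] at this
                simp at this
        obtain ⟨hminT, hpl⟩ := hkey
        -- assemble the new forest
        have hFv := merge_valid hF'v ht1 ht2 ht12 hnu hpl
        refine ⟨⟨insert (BT.node u t1 t2) ((F'.1.erase t1).erase t2), hFv⟩, ?_⟩
        apply List.map_injective_iff.2 Subtype.val_injective
        rw [chainOf_map_val]
        have hrkF : rkForest (insert (BT.node u t1 t2) ((F'.1.erase t1).erase t2)) =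
            rkForest F'.1 + 1 := rk_merge hF'v ht1 ht2 ht12 hnu
        have hpeel : peel (insert (BT.node u t1 t2) ((F'.1.erase t1).erase t2)) = F'.1 :=
          peel_merge hF'v ht1 ht2 ht12 hnu hpl hminT
        have hneF : (nls (insert (BT.node u t1 t2) ((F'.1.erase t1).erase t2))).Nonempty :=
          ⟨BT.node u t1 t2, mem_nls.2 ⟨Finset.mem_insert_self _ _, by intro a h; cases h⟩⟩
        rw [hrkF, fchain, if_pos hneF, hpeel, List.map_append, List.map_append,
          ← chainOf_map_val, hF']
        congr 1
        show [phiF (insert (BT.node u t1 t2) ((F'.1.erase t1).erase t2))] = [y.1]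
        congr 1
        rw [phiF_merge hF'v ht1 ht2 ht12 u, hpptT, hy]

lemma fMap_surjective : Function.Surjective (fMap (n := n)) := by
  rintro ⟨c, hhead, hchain, hasc⟩
  obtain ⟨F, hF⟩ := surj_aux c hhead hchain hasc
  exact ⟨F, Subtype.ext hF⟩

end Surjectivity

end PLaux


/-- The map `F ↦ c(F)` is a bijection between pointed Lyndon forests on
`[n]` and the ascent-free (w.r.t. `λ•` and `Λₙ•`) saturated chains of `Πₙ•` starting at
`0̂`; the chain `c(F)` is the unique chain from `0̂` whose word of labels is the word of
`F` read along the reverse-minimal linear extension of its internal vertices. -/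
theorem pointed_Lyndon_forest_chain_bijection (n : ℕ) :
    ∃ e : FLynP n ≃
        {c : List (PPart (Finset.Icc 1 n)) //
          c.head? = some (botPP (Finset.Icc 1 n)) ∧ c.Chain' covPP ∧
          AscFree ltLp (wordOf labPP c)},
      ∀ F : FLynP n, wordOf labPP (e F).1 = forestWord F.1 := by
  refine ⟨Equiv.ofBijective PLaux.fMap ⟨PLaux.fMap_injective, PLaux.fMap_surjective⟩, ?_⟩
  intro F
  exact PLaux.chainOf_word F
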